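/- arXiv:2303.01270 — 3 statements merged into one kernel-verified Lean document; each statement's English description precedes it below -/
import Mathlib

section
/- Let L ⊆ S and 0 ≤ κ ≤ κ' < 1. Then ρ^L_κ ≤ ρ^L_{κ'}, i.e., the spectral radius of the (L,κ)-lazy version of P is non-decreasing in κ. -/
open scoped Classical ENNReal NNReal

variable {S : Type*}

/-- The `n`-step transition probabilities `P^n(x,y)` (n-th matrix power of `P`). -/
noncomputable def kpow (P : S → S → ℝ) : ℕ → S → S → ℝ
  | 0, x, y => if x = y then 1 else 0
  | n+1, x, y => ∑' w, P x w * kpow P n w y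

/-- `P` is a transition probability: nonnegative entries and each row sums to `1`. -/
def IsTransProb (P : S → S → ℝ) : Prop :=
  (∀ x y, 0 ≤ P x y) ∧ ∀ x, HasSum (P x) 1

/-- `P` is irreducible: for all `x, y` there is `n ≥ 0` with `P^n(x,y) > 0`. -/
def Irred (P : S → S → ℝ) : Prop :=
  ∀ x y, ∃ n, 0 < kpow P n x y

/-- The Green function `G(x,y|z) = ∑_{n ≥ 0} P^n(x,y) zⁿ`, a sum in `[0,∞]`. -/
noncomputable def green (P : S → S → ℝ) (x y : S) (z : ℝ) : ℝ≥0∞ :=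
  ∑' n, ENNReal.ofReal (kpow P n x y * z ^ n)

/-- Radius of convergence of the power series with coefficients `a`,
as the supremum (in `[0,∞]`) of the nonnegative `z` at which the series converges. -/
noncomputable def convRadius (a : ℕ → ℝ) : ℝ≥0∞ :=
  ⨆ (z : ℝ≥0) (_ : Summable fun n => a n * (z : ℝ) ^ n), (z : ℝ≥0∞)

/-- The spectral radius as an extended nonnegative real: the reciprocal of the
radius of convergence of `G(x,x|·)` (independent of `x` when `P` is irreducible). -/
noncomputable def specRadiusE (P : S → S → ℝ) : ℝ≥0∞ :=
  ⨆ x, (convRadius fun n => kpow P n x x)⁻¹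

/-- The spectral radius `ρ` of `P`. -/
noncomputable def specRadius (P : S → S → ℝ) : ℝ :=
  (specRadiusE P).toReal

/-- The `(L,κ)`-lazy version `P^L_κ` of `P`:
`P^L_κ(x,y) = κ·1_{x=y} + (1-κ)P(x,y)` for `x ∈ L`, and `P^L_κ(x,y) = P(x,y)` for `x ∉ L`. -/
noncomputable def lazy (P : S → S → ℝ) (L : Set S) (κ : ℝ) : S → S → ℝ :=
  fun x y => if x ∈ L then (if x = y then κ else 0) + (1 - κ) * P x y else P x y

/-- First-return probabilities: `u_0(x,y) = 0`, `u_1(x,y) = P(x,y)`, and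
`u_n(x,y) = ∑_{w ≠ y} P(x,w) u_{n-1}(w,y)` for `n ≥ 2`. -/
noncomputable def fret (P : S → S → ℝ) : ℕ → S → S → ℝ
  | 0, _, _ => 0
  | 1, x, y => P x y
  | n+2, x, y => ∑' w, if w = y then 0 else P x w * fret P (n+1) w y

/-- The U-function `U(x,y|z) = ∑_{n ≥ 0} u_n(x,y) zⁿ`, a sum in `[0,∞]`. -/
noncomputable def Ufun (P : S → S → ℝ) (x y : S) (z : ℝ) : ℝ≥0∞ :=
  ∑' n, ENNReal.ofReal (fret P n x y * z ^ n)

/-- `r(U|x,y)`, the radius of convergence of `U(x,y|·)`. -/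
noncomputable def rU (P : S → S → ℝ) (x y : S) : ℝ≥0∞ :=
  convRadius fun n => fret P n x y

/-- `P` is rho-recurrent if `G(x,x|1/ρ) = ∞` (for all, equivalently some, `x`). -/
def RhoRecurrent (P : S → S → ℝ) : Prop :=
  ∀ x, green P x x (specRadius P)⁻¹ = ∞

/-- `P` is rho-transient if `G(x,x|1/ρ) < ∞` (for all, equivalently some, `x`). -/
def RhoTransient (P : S → S → ℝ) : Prop :=
  ∀ x, green P x x (specRadius P)⁻¹ ≠ ∞

/-- A rho-recurrent `P` is strictly rho-recurrent if `r(U|x,x) > 1/ρ` for some `x`. -/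
def StrictlyRhoRecurrent (P : S → S → ℝ) : Prop :=
  RhoRecurrent P ∧ ∃ x, ENNReal.ofReal (specRadius P)⁻¹ < rU P x x

/-- A rho-recurrent `P` is critically rho-recurrent if `r(U|x,x) = 1/ρ` for all `x`. -/
def CriticallyRhoRecurrent (P : S → S → ℝ) : Prop :=
  RhoRecurrent P ∧ ∀ x, rU P x x = ENNReal.ofReal (specRadius P)⁻¹
section AuxEpow

variable {S : Type*}

/-- `ℝ≥0∞`-valued matrix powers. -/
noncomputable def epow (M : S → S → ℝ≥0∞) : ℕ → S → S → ℝ≥0∞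
  | 0, x, y => if x = y then 1 else 0
  | n+1, x, y => ∑' w, M x w * epow M n w y

lemma epow_zero (M : S → S → ℝ≥0∞) (x y : S) :
    epow M 0 x y = if x = y then 1 else 0 := rfl

lemma epow_succ (M : S → S → ℝ≥0∞) (n : ℕ) (x y : S) :
    epow M (n+1) x y = ∑' w, M x w * epow M n w y := rfl

lemma epow_row {M : S → S → ℝ≥0∞} (hM : ∀ x, ∑' y, M x y = 1) :
    ∀ n x, ∑' y, epow M n x y = 1 := by
  intro n
  induction n with
  | zero =>
    intro x
    rw [tsum_eq_single x (by intro y hy; simp [epow_zero, Ne.symm hy])]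
    simp [epow_zero]
  | succ n ih =>
    intro x
    simp only [epow_succ]
    rw [ENNReal.tsum_comm]
    calc ∑' w, ∑' y, M x w * epow M n w y
        = ∑' w, M x w * ∑' y, epow M n w y := by
          exact tsum_congr fun w => ENNReal.tsum_mul_left
      _ = 1 := by simp only [ih, mul_one]; exact hM x

lemma epow_le_one {M : S → S → ℝ≥0∞} (hM : ∀ x, ∑' y, M x y = 1)
    (n : ℕ) (x y : S) : epow M n x y ≤ 1 :=
  (ENNReal.le_tsum y).trans (epow_row hM n x).le

lemma epow_add (M : S → S → ℝ≥0∞) (m n : ℕ) :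
    ∀ x y, epow M (m+n) x y = ∑' w, epow M m x w * epow M n w y := by
  induction m with
  | zero =>
    intro x y
    rw [Nat.zero_add]
    rw [tsum_eq_single x (by intro w hw; simp [epow_zero, Ne.symm hw])]
    simp [epow_zero]
  | succ m ih =>
    intro x y
    have hm : m + 1 + n = (m + n) + 1 := by omega
    rw [hm, epow_succ]
    calc ∑' w, M x w * epow M (m+n) w y
        = ∑' w, M x w * ∑' v, epow M m w v * epow M n v y := by
          exact tsum_congr fun w => by rw [ih]
      _ = ∑' w, ∑' v, M x w * (epow M m w v * epow M n v y) := by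
          exact tsum_congr fun w => ENNReal.tsum_mul_left.symm
      _ = ∑' v, ∑' w, M x w * (epow M m w v * epow M n v y) := ENNReal.tsum_comm
      _ = ∑' v, epow M (m+1) x v * epow M n v y := by
          refine tsum_congr fun v => ?_
          rw [epow_succ, ← ENNReal.tsum_mul_right]
          exact tsum_congr fun w => (mul_assoc _ _ _).symm

lemma epow_mono {A B : S → S → ℝ≥0∞} (h : ∀ x y, A x y ≤ B x y) :
    ∀ n x y, epow A n x y ≤ epow B n x y := by
  intro n
  induction n with
  | zero => intro x y; rw [epow_zero, epow_zero]
  | succ n ih =>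
    intro x y
    rw [epow_succ, epow_succ]
    exact ENNReal.tsum_le_tsum fun w => mul_le_mul' (h x w) (ih w y)

lemma epow_smul (c : ℝ≥0∞) (M : S → S → ℝ≥0∞) :
    ∀ n x y, epow (fun a b => c * M a b) n x y = c ^ n * epow M n x y := by
  intro n
  induction n with
  | zero => intro x y; simp [epow_zero]
  | succ n ih =>
    intro x y
    rw [epow_succ, epow_succ, ← ENNReal.tsum_mul_left]
    refine tsum_congr fun w => ?_
    rw [ih, pow_succ]
    ring

end AuxEpow
section AuxKpow

variable {S : Type*}

/-- The `ℝ≥0∞`-lift of a real kernel. -/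
noncomputable def eker (Q : S → S → ℝ) : S → S → ℝ≥0∞ :=
  fun x y => ENNReal.ofReal (Q x y)

lemma eker_row {Q : S → S → ℝ} (hQ : IsTransProb Q) (x : S) :
    ∑' y, eker Q x y = 1 := by
  show ∑' y, ENNReal.ofReal (Q x y) = 1
  rw [← ENNReal.ofReal_tsum_of_nonneg (hQ.1 x) (hQ.2 x).summable]
  rw [(hQ.2 x).tsum_eq, ENNReal.ofReal_one]

lemma kpow_ofReal {Q : S → S → ℝ} (hQ : IsTransProb Q) :
    ∀ (n : ℕ) (x y : S), 0 ≤ kpow Q n x y ∧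
      ENNReal.ofReal (kpow Q n x y) = epow (eker Q) n x y := by
  intro n
  induction n with
  | zero =>
    intro x y
    constructor
    · show (0:ℝ) ≤ if x = y then 1 else 0
      split <;> norm_num
    · show ENNReal.ofReal (if x = y then (1:ℝ) else 0) = if x = y then 1 else 0
      split <;> simp
  | succ n ih =>
    intro x y
    have hterm : ∀ w, ENNReal.ofReal (Q x w * kpow Q n w y)
        = eker Q x w * epow (eker Q) n w y := by
      intro w
      rw [ENNReal.ofReal_mul (hQ.1 x w), (ih w y).2]; rfl
    have hfin : ∑' w, eker Q x w * epow (eker Q) n w y ≠ ∞ := by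
      refine ne_of_lt (lt_of_le_of_lt ?_ ENNReal.one_lt_top)
      exact (epow_row (eker_row hQ) (n+1) x ▸ epow_le_one (eker_row hQ) (n+1) x y :
        epow (eker Q) (n+1) x y ≤ 1)
    have hsummable : Summable fun w => Q x w * kpow Q n w y := by
      have h1 : Summable fun w => (eker Q x w * epow (eker Q) n w y).toReal :=
        ENNReal.summable_toReal hfin
      refine h1.congr fun w => ?_
      rw [← hterm w, ENNReal.toReal_ofReal (mul_nonneg (hQ.1 x w) (ih w y).1)]
    have hknn : ∀ w, 0 ≤ Q x w * kpow Q n w y :=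
      fun w => mul_nonneg (hQ.1 x w) (ih w y).1
    have hkval : kpow Q (n+1) x y = ∑' w, Q x w * kpow Q n w y := rfl
    constructor
    · rw [hkval]; exact tsum_nonneg hknn
    · rw [hkval, ENNReal.ofReal_tsum_of_nonneg hknn hsummable, epow_succ]
      exact tsum_congr hterm

lemma kpow_nonneg {Q : S → S → ℝ} (hQ : IsTransProb Q) (n : ℕ) (x y : S) :
    0 ≤ kpow Q n x y := (kpow_ofReal hQ n x y).1

lemma kpow_le_one {Q : S → S → ℝ} (hQ : IsTransProb Q) (n : ℕ) (x y : S) :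
    kpow Q n x y ≤ 1 := by
  have h := (kpow_ofReal hQ n x y).2 ▸ epow_le_one (eker_row hQ) n x y
  exact ENNReal.ofReal_le_one.mp h

lemma lazy_isTransProb {P : S → S → ℝ} (hP : IsTransProb P) {L : Set S} {κ : ℝ}
    (h0 : 0 ≤ κ) (h1 : κ < 1) : IsTransProb (lazy P L κ) := by
  constructor
  · intro x y
    unfold lazy
    split
    · refine add_nonneg ?_ (mul_nonneg (by linarith) (hP.1 x y))
      split
      · exact h0
      · norm_num
    · exact hP.1 x y
  · intro x
    by_cases hx : x ∈ L
    · have ha : HasSum (fun y => if x = y then κ else 0) κ := by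
        have := hasSum_ite_eq x κ
        refine this.congr_fun fun y => ?_
        simp [eq_comm]
      have hb : HasSum (fun y => (1 - κ) * P x y) ((1 - κ) * 1) := (hP.2 x).mul_left _
      have := ha.add hb
      have h2 : κ + (1 - κ) * 1 = 1 := by ring
      rw [h2] at this
      refine this.congr_fun fun y => ?_
      simp [lazy, hx]
    · refine (hP.2 x).congr_fun fun y => ?_
      simp [lazy, hx]

/-- Superharmonic functions give diagonal bounds. -/
lemma epow_diag_le_of_superharmonic {M : S → S → ℝ≥0∞} {h : S → ℝ≥0∞} {t : ℝ≥0∞}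
    (hpos : ∀ x, 0 < h x) (hfin : ∀ x, h x ≠ ∞)
    (hsup : ∀ x, ∑' y, M x y * h y ≤ t * h x) :
    ∀ (n : ℕ) (x : S), epow M n x x ≤ t ^ n := by
  have key : ∀ (n : ℕ) (x : S), ∑' y, epow M n x y * h y ≤ t ^ n * h x := by
    intro n
    induction n with
    | zero =>
      intro x
      rw [tsum_eq_single x (by intro y hy; simp [epow_zero, Ne.symm hy])]
      simp [epow_zero]
    | succ n ih =>
      intro x
      calc ∑' y, epow M (n+1) x y * h y
          = ∑' y, ∑' w, M x w * (epow M n w y * h y) := by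
            refine tsum_congr fun y => ?_
            rw [epow_succ, ← ENNReal.tsum_mul_right]
            exact tsum_congr fun w => mul_assoc _ _ _
        _ = ∑' w, M x w * ∑' y, epow M n w y * h y := by
            rw [ENNReal.tsum_comm]
            exact tsum_congr fun w => ENNReal.tsum_mul_left
        _ ≤ ∑' w, M x w * (t ^ n * h w) :=
            ENNReal.tsum_le_tsum fun w => mul_le_mul_right (ih w) _
        _ = t ^ n * ∑' w, M x w * h w := by
            rw [← ENNReal.tsum_mul_left]
            exact tsum_congr fun w => by ring
        _ ≤ t ^ n * (t * h x) := mul_le_mul_right (hsup x) _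
        _ = t ^ (n+1) * h x := by rw [pow_succ]; ring
  intro n x
  have h1 : epow M n x x * h x ≤ t ^ n * h x :=
    le_trans (ENNReal.le_tsum x) (key n x)
  exact (ENNReal.mul_le_mul_iff_left (hpos x).ne' (hfin x)).mp h1

end AuxKpow
section AuxSpec

variable {S : Type*}

lemma specRadiusE_le_of_diag {Q : S → S → ℝ} (hQ : IsTransProb Q) {t u : ℝ}
    (ht : 0 ≤ t) (htu : t < u)
    (hbd : ∀ (n : ℕ) (x : S), kpow Q n x x ≤ t ^ n) :
    specRadiusE Q ≤ ENNReal.ofReal u := by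
  have hu0 : 0 < u := lt_of_le_of_lt ht htu
  refine iSup_le fun x => ?_
  set w : ℝ≥0 := (u⁻¹).toNNReal with hwdef
  have hw : ((w : ℝ)) = u⁻¹ := Real.coe_toNNReal _ (inv_nonneg.mpr hu0.le)
  have hsum : Summable fun n => kpow Q n x x * (w : ℝ) ^ n := by
    refine Summable.of_nonneg_of_le
      (fun n => mul_nonneg (kpow_nonneg hQ n x x) (pow_nonneg w.2 n))
      (fun n => ?_) (summable_geometric_of_lt_one
        (by positivity) ((div_lt_one hu0).mpr htu) : Summable fun n => (t/u)^n)
    calc kpow Q n x x * (w : ℝ) ^ n ≤ t ^ n * (w:ℝ) ^ n :=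
          mul_le_mul_of_nonneg_right (hbd n x) (pow_nonneg w.2 n)
      _ = (t/u)^n := by rw [hw, ← mul_pow, div_eq_mul_inv]
  have h1 : (w : ℝ≥0∞) ≤ convRadius fun n => kpow Q n x x := by
    refine le_trans (le_iSup_of_le hsum le_rfl :
      (w:ℝ≥0∞) ≤ ⨆ (_ : Summable fun n => kpow Q n x x * (w : ℝ) ^ n), (w:ℝ≥0∞)) ?_
    exact le_iSup (fun z : ℝ≥0 =>
      ⨆ (_ : Summable fun n => kpow Q n x x * (z : ℝ) ^ n), (z:ℝ≥0∞)) w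
  have hwc : (w : ℝ≥0∞) = (ENNReal.ofReal u)⁻¹ := by
    have : (w : ℝ≥0∞) = ENNReal.ofReal u⁻¹ := rfl
    rw [this, ENNReal.ofReal_inv_of_pos hu0]
  calc (convRadius fun n => kpow Q n x x)⁻¹ ≤ (w:ℝ≥0∞)⁻¹ := ENNReal.inv_le_inv' h1
    _ = ENNReal.ofReal u := by rw [hwc, inv_inv]

lemma specRadius_le_of_diag {Q : S → S → ℝ} (hQ : IsTransProb Q) {t : ℝ} (ht : 0 ≤ t)
    (hbd : ∀ (n : ℕ) (x : S), kpow Q n x x ≤ t ^ n) : specRadius Q ≤ t := by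
  by_contra hc
  push_neg at hc
  obtain ⟨u, hu1, hu2⟩ := exists_between hc
  have h := specRadiusE_le_of_diag hQ ht hu1 hbd
  have h2 := ENNReal.toReal_mono ENNReal.ofReal_ne_top h
  rw [ENNReal.toReal_ofReal (le_of_lt (lt_of_le_of_lt ht hu1))] at h2
  have h3 : specRadius Q ≤ u := h2
  linarith

lemma epow_lazy_lower {P : S → S → ℝ} (hP : IsTransProb P) {L : Set S} {κ : ℝ}
    (h0 : 0 ≤ κ) (h1 : κ ≤ 1) (n : ℕ) (x y : S) :
    ENNReal.ofReal (1-κ) ^ n * ENNReal.ofReal (kpow P n x y)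
      ≤ epow (eker (lazy P L κ)) n x y := by
  have hA : ∀ a b, ENNReal.ofReal (1-κ) * eker P a b ≤ eker (lazy P L κ) a b := by
    intro a b
    have h2 : (1-κ) * P a b ≤ lazy P L κ a b := by
      unfold lazy
      split
      · have hi : (0:ℝ) ≤ if a = b then κ else 0 := by split <;> simp [h0]
        linarith
      · nlinarith [hP.1 a b, mul_nonneg h0 (hP.1 a b)]
    calc ENNReal.ofReal (1-κ) * eker P a b = ENNReal.ofReal ((1-κ) * P a b) :=
          (ENNReal.ofReal_mul (by linarith : (0:ℝ) ≤ 1-κ)).symm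
      _ ≤ _ := ENNReal.ofReal_le_ofReal h2
  calc ENNReal.ofReal (1-κ) ^ n * ENNReal.ofReal (kpow P n x y)
      = ENNReal.ofReal (1-κ) ^ n * epow (eker P) n x y := by rw [(kpow_ofReal hP n x y).2]
    _ = epow (fun a b => ENNReal.ofReal (1-κ) * eker P a b) n x y := (epow_smul _ _ n x y).symm
    _ ≤ epow (eker (lazy P L κ)) n x y := epow_mono hA n x y

end AuxSpec
theorem lazy_specRadius_mono {S : Type*} [Countable S] [Infinite S] (P : S → S → ℝ)
    (hP : IsTransProb P) (hirr : Irred P)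
    (L : Set S) (κ κ' : ℝ) (hκ0 : 0 ≤ κ) (hκκ' : κ ≤ κ') (hκ'1 : κ' < 1) :
    specRadius (lazy P L κ) ≤ specRadius (lazy P L κ') := by
  have hκ1 : κ < 1 := lt_of_le_of_lt hκκ' hκ'1
  have hκ'0 : 0 ≤ κ' := le_trans hκ0 hκκ'
  have hQ : IsTransProb (lazy P L κ) := lazy_isTransProb hP hκ0 hκ1
  have hQ' : IsTransProb (lazy P L κ') := lazy_isTransProb hP hκ'0 hκ'1
  by_contra hcon
  push_neg at hcon
  have hQ1 : specRadius (lazy P L κ) ≤ 1 := specRadius_le_of_diag hQ zero_le_one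
    (fun n x => by rw [one_pow]; exact kpow_le_one hQ n x x)
  obtain ⟨t, ht1, ht2⟩ := exists_between hcon
  have htlt1 : t < 1 := lt_of_lt_of_le ht2 hQ1
  have ht0 : 0 < t := lt_of_le_of_lt ENNReal.toReal_nonneg ht1
  -- positivity of entries of epow of the lazy κ' chain
  have hposM' : ∀ x y : S, ∃ k, 0 < epow (eker (lazy P L κ')) k x y := by
    intro x y
    obtain ⟨k, hk⟩ := hirr x y
    refine ⟨k, lt_of_lt_of_le ?_ (epow_lazy_lower hP hκ'0 hκ'1.le k x y)⟩
    refine ENNReal.mul_pos (pow_ne_zero k ?_) ?_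
    · exact (ENNReal.ofReal_pos.mpr (by linarith)).ne'
    · exact (ENNReal.ofReal_pos.mpr hk).ne'
  obtain ⟨o⟩ : Nonempty S := inferInstance
  -- diagonal summability of the κ' chain at t⁻¹
  have hEfin : specRadiusE (lazy P L κ') ≤ ENNReal.ofReal 2 :=
    specRadiusE_le_of_diag hQ' zero_le_one one_lt_two
      (fun n x => by rw [one_pow]; exact kpow_le_one hQ' n x x)
  have hElt : specRadiusE (lazy P L κ') < ENNReal.ofReal t := by
    rw [ENNReal.lt_ofReal_iff_toReal_lt (ne_top_of_le_ne_top ENNReal.ofReal_ne_top hEfin)]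
    exact ht1
  have hconv : (ENNReal.ofReal t)⁻¹ < convRadius fun n => kpow (lazy P L κ') n o o := by
    refine ENNReal.inv_lt_iff_inv_lt.mp ?_
    exact lt_of_le_of_lt
      (le_iSup (fun x => (convRadius fun n => kpow (lazy P L κ') n x x)⁻¹) o) hElt
  obtain ⟨w, hw⟩ := lt_iSup_iff.mp hconv
  have hwsum : Summable fun n => kpow (lazy P L κ') n o o * (w : ℝ) ^ n := by
    by_contra hns
    rw [iSup_neg hns] at hw
    exact not_lt_bot hw
  rw [iSup_pos hwsum] at hw
  have hw0 : (0:ℝ) < (w:ℝ) := by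
    have h1 : (0:ℝ≥0∞) < (w:ℝ≥0∞) := lt_of_le_of_lt zero_le hw
    exact_mod_cast h1
  have hwt : t⁻¹ < (w:ℝ) := by
    have h3 : ENNReal.ofReal t⁻¹ < ENNReal.ofReal (w:ℝ) := by
      rw [ENNReal.ofReal_inv_of_pos ht0, ENNReal.ofReal_coe_nnreal]
      exact hw
    exact (ENNReal.ofReal_lt_ofReal_iff hw0).mp h3
  have hti0 : (0:ℝ) ≤ t⁻¹ := inv_nonneg.mpr ht0.le
  have hdiag : Summable fun n => kpow (lazy P L κ') n o o * t⁻¹ ^ n := by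
    refine Summable.of_nonneg_of_le
      (fun n => mul_nonneg (kpow_nonneg hQ' n o o) (pow_nonneg hti0 n))
      (fun n => mul_le_mul_of_nonneg_left (pow_le_pow_left₀ hti0 hwt.le n)
        (kpow_nonneg hQ' n o o)) hwsum
  -- the Green function at z = t⁻¹ as superharmonic function
  have hzE0 : ENNReal.ofReal t⁻¹ ≠ 0 := (ENNReal.ofReal_pos.mpr (by positivity)).ne'
  have hzEtop : ENNReal.ofReal t⁻¹ ≠ ∞ := ENNReal.ofReal_ne_top
  set hG : S → ℝ≥0∞ :=
    fun x => ∑' n, epow (eker (lazy P L κ')) n x o * (ENNReal.ofReal t⁻¹) ^ n with hGdef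
  have hterm : ∀ (n : ℕ) (x : S), epow (eker (lazy P L κ')) n x o * (ENNReal.ofReal t⁻¹) ^ n
      = ENNReal.ofReal (kpow (lazy P L κ') n x o * t⁻¹ ^ n) := by
    intro n x
    rw [← (kpow_ofReal hQ' n x o).2, ENNReal.ofReal_mul (kpow_nonneg hQ' n x o),
      ENNReal.ofReal_pow hti0]
  have hGo : hG o ≠ ∞ := by
    have : hG o = ENNReal.ofReal (∑' n, kpow (lazy P L κ') n o o * t⁻¹ ^ n) := by
      simp only [hGdef]
      rw [tsum_congr fun n => hterm n o]
      exact (ENNReal.ofReal_tsum_of_nonneg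
        (fun n => mul_nonneg (kpow_nonneg hQ' n o o) (pow_nonneg hti0 n)) hdiag).symm
    rw [this]
    exact ENNReal.ofReal_ne_top
  have hGfin : ∀ x, hG x ≠ ∞ := by
    intro x
    obtain ⟨k, hk⟩ := hposM' o x
    have hBne : epow (eker (lazy P L κ')) k o x ≠ 0 := hk.ne'
    have hkey : (epow (eker (lazy P L κ')) k o x * (ENNReal.ofReal t⁻¹) ^ k) * hG x ≤ hG o := by
      calc (epow (eker (lazy P L κ')) k o x * (ENNReal.ofReal t⁻¹) ^ k) * hG x
          = ∑' n, (epow (eker (lazy P L κ')) k o x * (ENNReal.ofReal t⁻¹) ^ k)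
              * (epow (eker (lazy P L κ')) n x o * (ENNReal.ofReal t⁻¹) ^ n) := by
            simp only [hGdef]
            rw [ENNReal.tsum_mul_left]
        _ ≤ ∑' n, epow (eker (lazy P L κ')) (k+n) o o * (ENNReal.ofReal t⁻¹) ^ (k+n) := by
            refine ENNReal.tsum_le_tsum fun n => ?_
            rw [pow_add]
            have hle : epow (eker (lazy P L κ')) k o x * epow (eker (lazy P L κ')) n x o
                ≤ epow (eker (lazy P L κ')) (k+n) o o := by
              rw [epow_add]
              exact ENNReal.le_tsum x
            calc (epow (eker (lazy P L κ')) k o x * (ENNReal.ofReal t⁻¹) ^ k)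
                  * (epow (eker (lazy P L κ')) n x o * (ENNReal.ofReal t⁻¹) ^ n)
                = (epow (eker (lazy P L κ')) k o x * epow (eker (lazy P L κ')) n x o)
                  * ((ENNReal.ofReal t⁻¹) ^ k * (ENNReal.ofReal t⁻¹) ^ n) := by ring
              _ ≤ epow (eker (lazy P L κ')) (k+n) o o
                  * ((ENNReal.ofReal t⁻¹) ^ k * (ENNReal.ofReal t⁻¹) ^ n) :=
                  mul_le_mul_left hle _
        _ ≤ hG o := by
            simp only [hGdef]
            exact ENNReal.tsum_comp_le_tsum_of_injective (add_right_injective k)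
              (fun m => epow (eker (lazy P L κ')) m o o * (ENNReal.ofReal t⁻¹) ^ m)
    by_contra htop
    rw [htop, ENNReal.mul_top (mul_ne_zero hBne (pow_ne_zero k hzE0))] at hkey
    exact hGo (top_le_iff.mp hkey)
  have hGpos : ∀ x, 0 < hG x := by
    intro x
    obtain ⟨k, hk⟩ := hposM' x o
    refine lt_of_lt_of_le ?_ (ENNReal.le_tsum k)
    exact ENNReal.mul_pos hk.ne' (pow_ne_zero k hzE0)
  -- superharmonicity for the κ' chain
  have hsup' : ∀ x, ∑' y, eker (lazy P L κ') x y * hG y ≤ ENNReal.ofReal t * hG x := by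
    intro x
    have hres : ∑' y, eker (lazy P L κ') x y * hG y
        = ∑' n, epow (eker (lazy P L κ')) (n+1) x o * (ENNReal.ofReal t⁻¹) ^ n := by
      calc ∑' y, eker (lazy P L κ') x y * hG y
          = ∑' y, ∑' n, eker (lazy P L κ') x y
              * (epow (eker (lazy P L κ')) n y o * (ENNReal.ofReal t⁻¹) ^ n) :=
            tsum_congr fun y => ENNReal.tsum_mul_left.symm
        _ = ∑' n, ∑' y, eker (lazy P L κ') x y
              * (epow (eker (lazy P L κ')) n y o * (ENNReal.ofReal t⁻¹) ^ n) := ENNReal.tsum_comm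
        _ = ∑' n, epow (eker (lazy P L κ')) (n+1) x o * (ENNReal.ofReal t⁻¹) ^ n := by
            refine tsum_congr fun n => ?_
            rw [epow_succ, ← ENNReal.tsum_mul_right]
            exact tsum_congr fun y => (mul_assoc _ _ _).symm
    rw [hres]
    have h1 : ENNReal.ofReal t⁻¹ * ∑' n, epow (eker (lazy P L κ')) (n+1) x o
        * (ENNReal.ofReal t⁻¹) ^ n ≤ hG x := by
      calc ENNReal.ofReal t⁻¹ * ∑' n, epow (eker (lazy P L κ')) (n+1) x o
            * (ENNReal.ofReal t⁻¹) ^ n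
          = ∑' n, epow (eker (lazy P L κ')) (n+1) x o * (ENNReal.ofReal t⁻¹) ^ (n+1) := by
            rw [← ENNReal.tsum_mul_left]
            exact tsum_congr fun n => by rw [pow_succ]; ring
        _ ≤ hG x := by
            simp only [hGdef]
            exact ENNReal.tsum_comp_le_tsum_of_injective Nat.succ_injective
              (fun m => epow (eker (lazy P L κ')) m x o * (ENNReal.ofReal t⁻¹) ^ m)
    have h2 : ENNReal.ofReal t = (ENNReal.ofReal t⁻¹)⁻¹ := by
      rw [ENNReal.ofReal_inv_of_pos ht0, inv_inv]
    calc ∑' n, epow (eker (lazy P L κ')) (n+1) x o * (ENNReal.ofReal t⁻¹) ^ n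
        = (ENNReal.ofReal t⁻¹)⁻¹ * (ENNReal.ofReal t⁻¹
            * ∑' n, epow (eker (lazy P L κ')) (n+1) x o * (ENNReal.ofReal t⁻¹) ^ n) := by
          rw [← mul_assoc, ENNReal.inv_mul_cancel hzE0 hzEtop, one_mul]
      _ ≤ (ENNReal.ofReal t⁻¹)⁻¹ * hG x := mul_le_mul_right h1 _
      _ = ENNReal.ofReal t * hG x := by rw [h2]
  -- row decomposition on L
  have hrowdec : ∀ (μ : ℝ), 0 ≤ μ → μ ≤ 1 → ∀ x ∈ L,
      ∑' y, eker (lazy P L μ) x y * hG y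
        = ENNReal.ofReal μ * hG x + ENNReal.ofReal (1-μ) * ∑' y, eker P x y * hG y := by
    intro μ hμ0 hμ1 x hx
    have hterm2 : ∀ y, eker (lazy P L μ) x y * hG y
        = (if x = y then ENNReal.ofReal μ else 0) * hG y
          + ENNReal.ofReal (1-μ) * (eker P x y * hG y) := by
      intro y
      have hdec : eker (lazy P L μ) x y
          = (if x = y then ENNReal.ofReal μ else 0) + ENNReal.ofReal (1-μ) * eker P x y := by
        show ENNReal.ofReal (lazy P L μ x y) = _
        have hl : lazy P L μ x y = (if x = y then μ else 0) + (1-μ) * P x y := by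
          simp only [lazy, if_pos hx]
        rw [hl, ENNReal.ofReal_add (by split <;> simp [hμ0])
          (mul_nonneg (by linarith) (hP.1 x y)), ENNReal.ofReal_mul (by linarith)]
        congr 1
        split <;> simp
      rw [hdec, add_mul, mul_assoc]
    calc ∑' y, eker (lazy P L μ) x y * hG y
        = ∑' y, ((if x = y then ENNReal.ofReal μ else 0) * hG y
            + ENNReal.ofReal (1-μ) * (eker P x y * hG y)) := tsum_congr hterm2
      _ = (∑' y, (if x = y then ENNReal.ofReal μ else 0) * hG y)
            + ENNReal.ofReal (1-μ) * ∑' y, eker P x y * hG y := by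
          rw [ENNReal.tsum_add, ENNReal.tsum_mul_left]
      _ = ENNReal.ofReal μ * hG x + ENNReal.ofReal (1-μ) * ∑' y, eker P x y * hG y := by
          congr 1
          rw [tsum_eq_single x (fun y hy => by rw [if_neg (Ne.symm hy), zero_mul]), if_pos rfl]
  -- superharmonicity for the κ chain
  have hsupQ : ∀ x, ∑' y, eker (lazy P L κ) x y * hG y ≤ ENNReal.ofReal t * hG x := by
    intro x
    by_cases hx : x ∈ L
    · have h' := hsup' x
      rw [hrowdec κ' hκ'0 hκ'1.le x hx] at h'
      rw [hrowdec κ hκ0 hκ1.le x hx]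
      have hSPfin : (∑' y, eker P x y * hG y) ≠ ∞ := by
        intro htop
        rw [htop, ENNReal.mul_top (ENNReal.ofReal_pos.mpr (by linarith : (0:ℝ) < 1-κ')).ne'] at h'
        have h4 : (⊤:ℝ≥0∞) ≤ ENNReal.ofReal t * hG x := le_trans le_add_self h'
        exact (ENNReal.mul_ne_top ENNReal.ofReal_ne_top (hGfin x)) (top_le_iff.mp h4)
      have hA0 : (0:ℝ) ≤ (hG x).toReal := ENNReal.toReal_nonneg
      have hSr0 : (0:ℝ) ≤ (∑' y, eker P x y * hG y).toReal := ENNReal.toReal_nonneg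
      have hGx : hG x = ENNReal.ofReal ((hG x).toReal) := (ENNReal.ofReal_toReal (hGfin x)).symm
      have hSPe : (∑' y, eker P x y * hG y)
          = ENNReal.ofReal ((∑' y, eker P x y * hG y).toReal) :=
        (ENNReal.ofReal_toReal hSPfin).symm
      set A := (hG x).toReal
      set Sr := (∑' y, eker P x y * hG y).toReal
      have hreal : κ' * A + (1-κ') * Sr ≤ t * A := by
        rw [hGx, hSPe, ← ENNReal.ofReal_mul hκ'0,
          ← ENNReal.ofReal_mul (by linarith : (0:ℝ) ≤ 1-κ'),
          ← ENNReal.ofReal_add (mul_nonneg hκ'0 hA0) (mul_nonneg (by linarith) hSr0),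
          ← ENNReal.ofReal_mul ht0.le] at h'
        exact (ENNReal.ofReal_le_ofReal_iff (mul_nonneg ht0.le hA0)).mp h'
      have hSrA : Sr ≤ A := by
        have h5 : (1-κ') * Sr ≤ (1-κ') * A := by
          nlinarith [mul_nonneg (sub_nonneg.mpr htlt1.le) hA0]
        exact (mul_le_mul_iff_right₀ (by linarith : (0:ℝ) < 1-κ')).mp h5
      have hreal2 : κ * A + (1-κ) * Sr ≤ t * A := by
        nlinarith [mul_nonneg (sub_nonneg.mpr hκκ') (sub_nonneg.mpr hSrA)]
      rw [hGx, hSPe, ← ENNReal.ofReal_mul hκ0,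
        ← ENNReal.ofReal_mul (by linarith : (0:ℝ) ≤ 1-κ),
        ← ENNReal.ofReal_add (mul_nonneg hκ0 hA0) (mul_nonneg (by linarith) hSr0),
        ← ENNReal.ofReal_mul ht0.le]
      exact ENNReal.ofReal_le_ofReal hreal2
    · have heq : ∀ y, eker (lazy P L κ) x y = eker (lazy P L κ') x y := by
        intro y
        show ENNReal.ofReal (lazy P L κ x y) = ENNReal.ofReal (lazy P L κ' x y)
        simp [lazy, hx]
      rw [tsum_congr fun y => by rw [heq y]]
      exact hsup' x
  -- conclude
  have hdiagQ : ∀ (n : ℕ) (x : S), kpow (lazy P L κ) n x x ≤ t ^ n := by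
    intro n x
    have h := epow_diag_le_of_superharmonic hGpos hGfin hsupQ n x
    have h2 : ENNReal.ofReal (kpow (lazy P L κ) n x x) ≤ ENNReal.ofReal (t ^ n) := by
      rw [(kpow_ofReal hQ n x x).2, ENNReal.ofReal_pow ht0.le]
      exact h
    exact (ENNReal.ofReal_le_ofReal_iff (pow_nonneg ht0.le n)).mp h2
  have hfinal := specRadius_le_of_diag hQ ht0.le hdiagQ
  linarith
end

section
/- For every L ⊆ S, the map κ ↦ ρ^L_κ is continuous on [0,1). -/
open scoped Classical ENNReal NNReal

variable {S : Type*}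

/-! ### auxiliary development -/

namespace LazyAux

/-- `ℝ≥0∞`-valued matrix entries. -/
noncomputable def toE (P : S → S → ℝ) : S → S → ℝ≥0∞ := fun x y => ENNReal.ofReal (P x y)

/-- `ℝ≥0∞`-valued matrix powers. -/
noncomputable def kpowE (Q : S → S → ℝ≥0∞) : ℕ → S → S → ℝ≥0∞
  | 0, x, y => if x = y then 1 else 0
  | n+1, x, y => ∑' w, Q x w * kpowE Q n w y

section basic

variable {P : S → S → ℝ} (hP : IsTransProb P)

lemma kpow_nonneg (hP0 : ∀ x y, 0 ≤ P x y) : ∀ n x y, 0 ≤ kpow P n x y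
  | 0, x, y => by simp only [kpow]; split <;> norm_num
  | n+1, x, y => tsum_nonneg fun w => mul_nonneg (hP0 x w) (kpow_nonneg hP0 n w y)

include hP

lemma kpow_le_one : ∀ n x y, kpow P n x y ≤ 1
  | 0, x, y => by simp only [kpow]; split <;> norm_num
  | n+1, x, y => by
      have hs : Summable (P x) := (hP.2 x).summable
      have hle : ∀ w, P x w * kpow P n w y ≤ P x w := fun w =>
        mul_le_of_le_one_right (hP.1 x w) (kpow_le_one n w y)
      have h0 : ∀ w, 0 ≤ P x w * kpow P n w y := fun w =>
        mul_nonneg (hP.1 x w) (kpow_nonneg hP.1 n w y)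
      calc kpow P (n+1) x y = ∑' w, P x w * kpow P n w y := rfl
        _ ≤ ∑' w, P x w := Summable.tsum_le_tsum hle (hs.of_nonneg_of_le h0 hle) hs
        _ = 1 := (hP.2 x).tsum_eq

lemma kpow_summable (n : ℕ) (x y : S) : Summable fun w => P x w * kpow P n w y :=
  (hP.2 x).summable.of_nonneg_of_le
    (fun w => mul_nonneg (hP.1 x w) (kpow_nonneg hP.1 n w y))
    (fun w => mul_le_of_le_one_right (hP.1 x w) (kpow_le_one hP n w y))

lemma kpowE_eq : ∀ n x y, kpowE (toE P) n x y = ENNReal.ofReal (kpow P n x y)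
  | 0, x, y => by
      simp only [kpowE, kpow]; split <;> simp
  | n+1, x, y => by
      have h0 : ∀ w, 0 ≤ P x w * kpow P n w y := fun w =>
        mul_nonneg (hP.1 x w) (kpow_nonneg hP.1 n w y)
      calc kpowE (toE P) (n+1) x y = ∑' w, toE P x w * kpowE (toE P) n w y := rfl
        _ = ∑' w, ENNReal.ofReal (P x w * kpow P n w y) := by
            refine tsum_congr fun w => ?_
            rw [kpowE_eq n w y, toE, ← ENNReal.ofReal_mul (hP.1 x w)]
        _ = ENNReal.ofReal (∑' w, P x w * kpow P n w y) :=
            (ENNReal.ofReal_tsum_of_nonneg h0 (kpow_summable hP n x y)).symm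
        _ = ENNReal.ofReal (kpow P (n+1) x y) := rfl

lemma rowE : ∀ x, ∑' y, toE P x y = 1 := fun x => by
  rw [show (1 : ℝ≥0∞) = ENNReal.ofReal ((1:ℝ)) by simp,
    ← (hP.2 x).tsum_eq, ENNReal.ofReal_tsum_of_nonneg (hP.1 x) (hP.2 x).summable]
  rfl

lemma kpowE_le_one (n : ℕ) (x y : S) : kpowE (toE P) n x y ≤ 1 := by
  rw [kpowE_eq hP]
  exact ENNReal.ofReal_le_one.2 (kpow_le_one hP n x y)

end basic

/-- Green-type function in `ℝ≥0∞`. -/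
noncomputable def GE (Q : S → S → ℝ≥0∞) (x y : S) (z : ℝ≥0∞) : ℝ≥0∞ :=
  ∑' n, kpowE Q n x y * z ^ n

/-- radius as a sup over `z` with finite `GE`. -/
noncomputable def rE (Q : S → S → ℝ≥0∞) (x : S) : ℝ≥0∞ :=
  ⨆ (z : ℝ≥0) (_ : GE Q x x z ≠ ∞), (z : ℝ≥0∞)

lemma convRadius_eq {P : S → S → ℝ} (hP : IsTransProb P) (x : S) :
    convRadius (fun n => kpow P n x x) = rE (toE P) x := by
  unfold convRadius rE
  refine iSup_congr fun z => ?_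
  have hiff : (Summable fun n => kpow P n x x * (z : ℝ) ^ n) ↔ GE (toE P) x x z ≠ ∞ := by
    have hterm : ∀ n, ENNReal.ofReal (kpow P n x x * (z:ℝ) ^ n)
        = kpowE (toE P) n x x * (z : ℝ≥0∞) ^ n := fun n => by
      rw [ENNReal.ofReal_mul (kpow_nonneg hP.1 n x x), kpowE_eq hP,
        ENNReal.ofReal_pow z.coe_nonneg, ENNReal.ofReal_coe_nnreal]
    have h0 : ∀ n, 0 ≤ kpow P n x x * (z:ℝ) ^ n := fun n =>
      mul_nonneg (kpow_nonneg hP.1 n x x) (pow_nonneg z.2 n)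
    constructor
    · intro hs
      rw [GE, ← tsum_congr hterm, ← ENNReal.ofReal_tsum_of_nonneg h0 hs]
      exact ENNReal.ofReal_ne_top
    · intro hne
      have : Summable fun n => (ENNReal.ofReal (kpow P n x x * (z:ℝ)^n)).toReal := by
        refine ENNReal.summable_toReal ?_
        rw [tsum_congr hterm]; exact hne
      refine this.congr fun n => ENNReal.toReal_ofReal (h0 n)
  rw [hiff]

lemma specRadiusE_eq {P : S → S → ℝ} (hP : IsTransProb P) :
    specRadiusE P = ⨆ x, (rE (toE P) x)⁻¹ :=
  iSup_congr fun x => by rw [convRadius_eq hP]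

end LazyAux

namespace LazyAux2
open LazyAux

variable {P : S → S → ℝ} {L : Set S} {μ : ℝ}

lemma lazy_isTransProb (hP : IsTransProb P) (h0 : 0 ≤ μ) (h1 : μ ≤ 1) :
    IsTransProb (lazy P L μ) := by
  constructor
  · intro x y
    unfold lazy
    split
    · refine add_nonneg ?_ (mul_nonneg (by linarith) (hP.1 x y))
      split <;> simp [h0]
    · exact hP.1 x y
  · intro x
    unfold lazy
    by_cases hx : x ∈ L
    · simp only [hx, if_true]
      have h1' : HasSum (fun y => if x = y then μ else 0) μ := by
        simpa [eq_comm] using hasSum_ite_eq x μ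
      have h2' : HasSum (fun y => (1 - μ) * P x y) ((1-μ)*1) := (hP.2 x).mul_left _
      have := h1'.add h2'
      simpa using this
    · simp only [hx, if_false]
      exact hP.2 x

lemma lazy_lazy {κ κ' : ℝ} (hκ : κ < 1) (h : μ = (κ' - κ)/(1-κ)) :
    lazy (lazy P L κ) L μ = lazy P L κ' := by
  have hne : (1:ℝ) - κ ≠ 0 := by linarith
  funext x y
  unfold lazy
  by_cases hx : x ∈ L
  · simp only [hx, if_true]
    have hμκ : μ * (1 - κ) = κ' - κ := by
      rw [h]; field_simp
    by_cases hxy : x = y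
    · simp only [hxy, if_true]
      linear_combination (1 - P y y) * hμκ
    · simp only [hxy, if_false]
      linear_combination (-(P x y)) * hμκ
  · simp only [hx, if_false]

end LazyAux2

namespace LazyCore
open LazyAux

variable {P : S → S → ℝ} {L : Set S} {μ : ℝ}

/-- pointwise lower bound: `(1-μ)·Q ≤ lazy Q L μ` entrywise, in `ℝ≥0∞`. -/
lemma toE_lazy_lower (hP0 : ∀ x y, 0 ≤ P x y) (h0 : 0 ≤ μ) (h1 : μ ≤ 1) (x y : S) :
    ENNReal.ofReal (1 - μ) * toE P x y ≤ toE (lazy P L μ) x y := by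
  rw [toE, toE, ← ENNReal.ofReal_mul (by linarith)]
  refine ENNReal.ofReal_le_ofReal ?_
  unfold lazy
  split
  · have : (0:ℝ) ≤ if x = y then μ else 0 := by split <;> simp [h0]
    linarith
  · nlinarith [hP0 x y]

/-- pointwise upper bound: `lazy Q L μ ≤ μ·I + Q` entrywise, in `ℝ≥0∞`. -/
lemma toE_lazy_upper (hP0 : ∀ x y, 0 ≤ P x y) (h0 : 0 ≤ μ) (h1 : μ ≤ 1) (x y : S) :
    toE (lazy P L μ) x y ≤ (if x = y then ENNReal.ofReal μ else 0) + toE P x y := by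
  have : (if x = y then ENNReal.ofReal μ else 0) + toE P x y
      = ENNReal.ofReal ((if x = y then μ else 0) + P x y) := by
    rw [ENNReal.ofReal_add (by split <;> simp [h0]) (hP0 x y)]
    split <;> simp [toE]
  rw [this, toE]
  refine ENNReal.ofReal_le_ofReal ?_
  unfold lazy
  split
  · nlinarith [hP0 x y]
  · have : (0:ℝ) ≤ if x = y then μ else 0 := by split <;> simp [h0]
    linarith

/-- lower comparison of matrix powers. -/
lemma kpowE_lazy_lower (hP0 : ∀ x y, 0 ≤ P x y) (h0 : 0 ≤ μ) (h1 : μ ≤ 1) :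
    ∀ n x y, ENNReal.ofReal (1 - μ) ^ n * kpowE (toE P) n x y
      ≤ kpowE (toE (lazy P L μ)) n x y
  | 0, x, y => by simp [kpowE]
  | n+1, x, y => by
      calc ENNReal.ofReal (1 - μ) ^ (n+1) * kpowE (toE P) (n+1) x y
          = ∑' w, (ENNReal.ofReal (1-μ) * toE P x w)
              * (ENNReal.ofReal (1-μ) ^ n * kpowE (toE P) n w y) := by
            rw [show kpowE (toE P) (n+1) x y = ∑' w, toE P x w * kpowE (toE P) n w y from rfl,
              ← ENNReal.tsum_mul_left]
            exact tsum_congr fun w => by ring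
        _ ≤ ∑' w, toE (lazy P L μ) x w * kpowE (toE (lazy P L μ)) n w y :=
            ENNReal.tsum_le_tsum fun w =>
              mul_le_mul' (toE_lazy_lower hP0 h0 h1 x w) (kpowE_lazy_lower hP0 h0 h1 n w y)
        _ = kpowE (toE (lazy P L μ)) (n+1) x y := rfl

/-- powers of `μ'·I + Q`. -/
noncomputable def kM (Q : S → S → ℝ≥0∞) (μ' : ℝ≥0∞) : ℕ → S → S → ℝ≥0∞
  | 0, x, y => if x = y then 1 else 0
  | n+1, x, y => μ' * kM Q μ' n x y + ∑' w, Q x w * kM Q μ' n w y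

/-- upper comparison of matrix powers. -/
lemma kpowE_le_kM (hP0 : ∀ x y, 0 ≤ P x y) (h0 : 0 ≤ μ) (h1 : μ ≤ 1) :
    ∀ n x y, kpowE (toE (lazy P L μ)) n x y ≤ kM (toE P) (ENNReal.ofReal μ) n x y
  | 0, x, y => by simp [kpowE, kM]
  | n+1, x, y => by
      calc kpowE (toE (lazy P L μ)) (n+1) x y
          = ∑' w, toE (lazy P L μ) x w * kpowE (toE (lazy P L μ)) n w y := rfl
        _ ≤ ∑' w, ((if x = w then ENNReal.ofReal μ else 0) + toE P x w)
              * kM (toE P) (ENNReal.ofReal μ) n w y :=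
            ENNReal.tsum_le_tsum fun w =>
              mul_le_mul' (toE_lazy_upper hP0 h0 h1 x w) (kpowE_le_kM hP0 h0 h1 n w y)
        _ = (∑' w, (if x = w then ENNReal.ofReal μ else 0) * kM (toE P) (ENNReal.ofReal μ) n w y)
            + ∑' w, toE P x w * kM (toE P) (ENNReal.ofReal μ) n w y := by
            rw [← ENNReal.tsum_add]
            exact tsum_congr fun w => by rw [add_mul]
        _ = kM (toE P) (ENNReal.ofReal μ) (n+1) x y := by
            congr 1
            rw [tsum_eq_single x (fun w hw => by simp [Ne.symm hw])]
            simp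

/-- the key geometric bound on `kM`. -/
lemma kM_le (Q : S → S → ℝ≥0∞) (μ' : ℝ≥0∞) (x' : S) (t : ℝ≥0∞) (ht0 : t ≠ 0) (htop : t ≠ ∞) :
    ∀ n x, kM Q μ' n x x' ≤ (μ' + t⁻¹) ^ n * GE Q x x' t
  | 0, x => by
      have : kpowE Q 0 x x' * t ^ 0 ≤ GE Q x x' t := ENNReal.le_tsum 0
      simpa [kM, kpowE] using this
  | n+1, x => by
      have key : ∑' w, Q x w * GE Q w x' t ≤ t⁻¹ * GE Q x x' t := by
        calc ∑' w, Q x w * GE Q w x' t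
            = ∑' w, ∑' m, Q x w * (kpowE Q m w x' * t ^ m) := by
              exact tsum_congr fun w => by rw [GE, ← ENNReal.tsum_mul_left]
          _ = ∑' m, ∑' w, Q x w * (kpowE Q m w x' * t ^ m) := ENNReal.tsum_comm
          _ = ∑' m, kpowE Q (m+1) x x' * t ^ m := by
              refine tsum_congr fun m => ?_
              rw [show kpowE Q (m+1) x x' = ∑' w, Q x w * kpowE Q m w x' from rfl,
                ← ENNReal.tsum_mul_right]
              exact tsum_congr fun w => by ring
          _ = t⁻¹ * ∑' m, kpowE Q (m+1) x x' * t ^ (m+1) := by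
              rw [← ENNReal.tsum_mul_left]
              refine tsum_congr fun m => ?_
              have h : t⁻¹ * (kpowE Q (m+1) x x' * t ^ (m+1))
                  = kpowE Q (m+1) x x' * t ^ m * (t⁻¹ * t) := by rw [pow_succ]; ring
              rw [h, ENNReal.inv_mul_cancel ht0 htop, mul_one]
          _ ≤ t⁻¹ * GE Q x x' t := by
              refine mul_le_mul_right ?_ _
              exact le_add_self.trans_eq
                (tsum_eq_zero_add' (f := fun n => kpowE Q n x x' * t ^ n) ENNReal.summable).symm
      calc kM Q μ' (n+1) x x' = μ' * kM Q μ' n x x' + ∑' w, Q x w * kM Q μ' n w x' := rfl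
        _ ≤ μ' * ((μ' + t⁻¹) ^ n * GE Q x x' t)
            + ∑' w, Q x w * ((μ' + t⁻¹) ^ n * GE Q w x' t) := by
            refine add_le_add (mul_le_mul_right (kM_le Q μ' x' t ht0 htop n x) _)
              (ENNReal.tsum_le_tsum fun w => mul_le_mul_right (kM_le Q μ' x' t ht0 htop n w) _)
        _ = μ' * ((μ' + t⁻¹) ^ n * GE Q x x' t)
            + (μ' + t⁻¹) ^ n * ∑' w, Q x w * GE Q w x' t := by
            rw [← ENNReal.tsum_mul_left]
            congr 1
            exact tsum_congr fun w => by ring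
        _ ≤ μ' * ((μ' + t⁻¹) ^ n * GE Q x x' t) + (μ' + t⁻¹) ^ n * (t⁻¹ * GE Q x x' t) :=
            add_le_add_right (mul_le_mul_right key _) _
        _ = (μ' + t⁻¹) ^ (n+1) * GE Q x x' t := by ring

end LazyCore

namespace LazyRad
open LazyAux LazyCore

variable {P : S → S → ℝ} {L : Set S} {μ : ℝ}

lemma le_rE {Q : S → S → ℝ≥0∞} {x : S} {z : ℝ≥0} (h : GE Q x x z ≠ ∞) :
    (z : ℝ≥0∞) ≤ rE Q x :=
  le_iSup₂ (f := fun (z : ℝ≥0) (_ : GE Q x x (z : ℝ≥0∞) ≠ ∞) => (z : ℝ≥0∞)) z h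

lemma GE_zero_ne_top (Q : S → S → ℝ≥0∞) (x : S) : GE Q x x (0 : ℝ≥0) ≠ ∞ := by
  have : GE Q x x ((0:ℝ≥0) : ℝ≥0∞) = kpowE Q 0 x x * (0:ℝ≥0∞) ^ 0 := by
    rw [GE]
    refine tsum_eq_single 0 fun n hn => ?_
    cases n with
    | zero => exact absurd rfl hn
    | succ m => simp
  rw [this]
  simp [kpowE]

lemma one_le_rE (hP : IsTransProb P) (x : S) : 1 ≤ rE (toE P) x := by
  refine ENNReal.le_of_forall_nnreal_lt fun z hz => ?_
  refine le_rE ?_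
  have hle : GE (toE P) x x z ≤ ∑' n, (z : ℝ≥0∞) ^ n :=
    ENNReal.tsum_le_tsum fun n => by
      calc kpowE (toE P) n x x * (z:ℝ≥0∞) ^ n ≤ 1 * (z:ℝ≥0∞) ^ n :=
            mul_le_mul_left (kpowE_le_one hP n x x) _
        _ = (z:ℝ≥0∞) ^ n := one_mul _
  refine ne_top_of_le_ne_top ?_ hle
  rw [ENNReal.tsum_geometric]
  rw [Ne, ENNReal.inv_eq_top, tsub_eq_zero_iff_le]
  exact not_le.2 hz

/-- lower bound on spectral radius of the lazy chain. -/
lemma rE_inv_lower (hP : IsTransProb P) (h0 : 0 ≤ μ) (h1 : μ < 1) (x : S) :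
    ENNReal.ofReal (1 - μ) * (rE (toE P) x)⁻¹ ≤ (rE (toE (lazy P L μ)) x)⁻¹ := by
  set c : ℝ≥0∞ := ENNReal.ofReal (1 - μ) with hc
  have hc0 : c ≠ 0 := by
    rw [hc, Ne, ENNReal.ofReal_eq_zero, not_le]; linarith
  have hctop : c ≠ ∞ := ENNReal.ofReal_ne_top
  have key : c * rE (toE (lazy P L μ)) x ≤ rE (toE P) x := by
    rw [rE, ENNReal.mul_iSup]
    refine iSup_le fun z => ?_
    rw [ENNReal.mul_iSup]
    refine iSup_le fun hz => ?_
    have hcz : c * (z : ℝ≥0∞) = ((Real.toNNReal (1 - μ) * z : ℝ≥0) : ℝ≥0∞) := by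
      rw [ENNReal.coe_mul, hc, ENNReal.ofReal]
    rw [hcz]
    refine le_rE ?_
    refine ne_top_of_le_ne_top hz ?_
    refine ENNReal.tsum_le_tsum fun n => ?_
    calc kpowE (toE P) n x x * ((Real.toNNReal (1 - μ) * z : ℝ≥0) : ℝ≥0∞) ^ n
        = c ^ n * kpowE (toE P) n x x * (z:ℝ≥0∞) ^ n := by
          rw [← hcz, mul_pow]; ring
      _ ≤ kpowE (toE (lazy P L μ)) n x x * (z:ℝ≥0∞) ^ n :=
          mul_le_mul_left (kpowE_lazy_lower hP.1 h0 h1.le n x x) _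
  calc c * (rE (toE P) x)⁻¹ ≤ c * (c * rE (toE (lazy P L μ)) x)⁻¹ :=
        mul_le_mul_right (ENNReal.inv_le_inv.2 key) _
    _ = c * (c⁻¹ * (rE (toE (lazy P L μ)) x)⁻¹) := by
        rw [ENNReal.mul_inv (Or.inl hc0) (Or.inl hctop)]
    _ = (rE (toE (lazy P L μ)) x)⁻¹ := by
        rw [← mul_assoc, ENNReal.mul_inv_cancel hc0 hctop, one_mul]

/-- upper bound on spectral radius of the lazy chain. -/
lemma rE_inv_upper (hP : IsTransProb P) (h0 : 0 ≤ μ) (h1 : μ < 1) (x : S) :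
    (rE (toE (lazy P L μ)) x)⁻¹ ≤ (rE (toE P) x)⁻¹ + ENNReal.ofReal μ := by
  set μ' : ℝ≥0∞ := ENNReal.ofReal μ with hμ'
  set r : ℝ≥0∞ := rE (toE P) x with hr
  have hμtop : μ' ≠ ∞ := ENNReal.ofReal_ne_top
  have key : (r⁻¹ + μ')⁻¹ ≤ rE (toE (lazy P L μ)) x := by
    refine ENNReal.le_of_forall_nnreal_lt fun z hz => ?_
    rcases eq_or_ne z 0 with rfl | hz0
    · exact le_rE (GE_zero_ne_top _ _)
    have hztop : ((z:ℝ≥0∞))⁻¹ ≠ ∞ := ENNReal.inv_ne_top.2 (ENNReal.coe_ne_zero.2 hz0)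
    -- from z < (r⁻¹ + μ')⁻¹ get r⁻¹ + μ' < z⁻¹
    have h2 : r⁻¹ + μ' < ((z:ℝ≥0∞))⁻¹ := ENNReal.lt_inv_iff_lt_inv.1 hz
    have h3 : r⁻¹ < ((z:ℝ≥0∞))⁻¹ - μ' :=
      (ENNReal.cancel_of_ne hμtop).lt_tsub_iff_right.2 h2
    have h4 : (((z:ℝ≥0∞))⁻¹ - μ')⁻¹ < r := ENNReal.inv_lt_iff_inv_lt.1 h3
    -- extract a witness t
    rw [hr, rE, lt_iSup_iff] at h4
    obtain ⟨t, h4⟩ := h4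
    rw [lt_iSup_iff] at h4
    obtain ⟨ht, h4⟩ := h4
    have hd_top : ((z:ℝ≥0∞))⁻¹ - μ' ≠ ∞ := ne_top_of_le_ne_top hztop tsub_le_self
    have ht0 : (t : ℝ≥0∞) ≠ 0 :=
      (lt_of_lt_of_le (ENNReal.inv_pos.2 hd_top) h4.le).ne'
    have ht_inv : ((t:ℝ≥0∞))⁻¹ < ((z:ℝ≥0∞))⁻¹ - μ' := ENNReal.inv_lt_iff_inv_lt.1 h4
    have h5 : μ' + ((t:ℝ≥0∞))⁻¹ < ((z:ℝ≥0∞))⁻¹ := by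
      have := (ENNReal.cancel_of_ne hμtop).lt_tsub_iff_right.1 ht_inv
      rwa [add_comm] at this
    have hs1 : ((μ' + ((t:ℝ≥0∞))⁻¹) * (z:ℝ≥0∞)) < 1 := by
      calc (μ' + ((t:ℝ≥0∞))⁻¹) * (z:ℝ≥0∞) = (z:ℝ≥0∞) * (μ' + ((t:ℝ≥0∞))⁻¹) := mul_comm _ _
        _ < (z:ℝ≥0∞) * ((z:ℝ≥0∞))⁻¹ :=
            ENNReal.mul_lt_mul_right (ENNReal.coe_ne_zero.2 hz0) ENNReal.coe_ne_top h5
        _ = 1 := ENNReal.mul_inv_cancel (ENNReal.coe_ne_zero.2 hz0) ENNReal.coe_ne_top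
    refine le_rE ?_
    have hb1 : GE (toE (lazy P L μ)) x x (z:ℝ≥0∞)
        ≤ ∑' n, ((μ' + ((t:ℝ≥0∞))⁻¹) ^ n * GE (toE P) x x (t:ℝ≥0∞)) * (z:ℝ≥0∞) ^ n :=
      ENNReal.tsum_le_tsum fun n => mul_le_mul_left
        ((kpowE_le_kM hP.1 h0 h1.le n x x).trans
          (kM_le (toE P) μ' x (t:ℝ≥0∞) ht0 ENNReal.coe_ne_top n x)) _
    have hb2 : (∑' n, ((μ' + ((t:ℝ≥0∞))⁻¹) ^ n * GE (toE P) x x (t:ℝ≥0∞)) * (z:ℝ≥0∞) ^ n)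
        = GE (toE P) x x (t:ℝ≥0∞) * ∑' n, ((μ' + ((t:ℝ≥0∞))⁻¹) * (z:ℝ≥0∞)) ^ n := by
      rw [← ENNReal.tsum_mul_left]
      exact tsum_congr fun n => by rw [mul_pow]; ring
    refine ne_top_of_le_ne_top ?_ hb1
    rw [hb2, ENNReal.tsum_geometric]
    exact ENNReal.mul_ne_top ht (ENNReal.inv_ne_top.2 (tsub_pos_iff_lt.2 hs1).ne')
  have := ENNReal.inv_le_inv.2 key
  rwa [inv_inv] at this

end LazyRad

namespace LazyFinal
open LazyAux LazyAux2 LazyCore LazyRad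

variable {P : S → S → ℝ} {L : Set S} {μ : ℝ}

lemma specRadiusE_le_one (hP : IsTransProb P) : specRadiusE P ≤ 1 := by
  rw [specRadiusE_eq hP]
  exact iSup_le fun x => ENNReal.inv_le_one.2 (one_le_rE hP x)

lemma specRadiusE_upper (hP : IsTransProb P) (h0 : 0 ≤ μ) (h1 : μ < 1) :
    specRadiusE (lazy P L μ) ≤ specRadiusE P + ENNReal.ofReal μ := by
  rw [specRadiusE_eq hP, specRadiusE_eq (lazy_isTransProb (L := L) hP h0 h1.le)]
  exact iSup_le fun x => (rE_inv_upper hP h0 h1 x).trans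
    (add_le_add_left (le_iSup (fun x => (rE (toE P) x)⁻¹) x) _)

lemma specRadiusE_lower (hP : IsTransProb P) (h0 : 0 ≤ μ) (h1 : μ < 1) :
    ENNReal.ofReal (1 - μ) * specRadiusE P ≤ specRadiusE (lazy P L μ) := by
  rw [specRadiusE_eq hP, specRadiusE_eq (lazy_isTransProb (L := L) hP h0 h1.le)]
  rw [ENNReal.mul_iSup]
  exact iSup_le fun x => (rE_inv_lower hP h0 h1 x).trans
    (le_iSup (fun x => (rE (toE (lazy P L μ)) x)⁻¹) x)

lemma specRadius_nonneg (P : S → S → ℝ) : 0 ≤ specRadius P := ENNReal.toReal_nonneg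

lemma specRadius_le_one (hP : IsTransProb P) : specRadius P ≤ 1 := by
  have := ENNReal.toReal_mono ENNReal.one_ne_top (specRadiusE_le_one hP)
  simpa [specRadius] using this

lemma specRadiusE_ne_top (hP : IsTransProb P) : specRadiusE P ≠ ∞ :=
  ne_top_of_le_ne_top ENNReal.one_ne_top (specRadiusE_le_one hP)

lemma real_upper (hP : IsTransProb P) (h0 : 0 ≤ μ) (h1 : μ < 1) :
    specRadius (lazy P L μ) ≤ specRadius P + μ := by
  have h := specRadiusE_upper (L := L) hP h0 h1
  have := ENNReal.toReal_mono
    (ENNReal.add_ne_top.2 ⟨specRadiusE_ne_top hP, ENNReal.ofReal_ne_top⟩) h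
  rwa [ENNReal.toReal_add (specRadiusE_ne_top hP) ENNReal.ofReal_ne_top,
    ENNReal.toReal_ofReal h0] at this

lemma real_lower (hP : IsTransProb P) (h0 : 0 ≤ μ) (h1 : μ < 1) :
    (1 - μ) * specRadius P ≤ specRadius (lazy P L μ) := by
  have h := specRadiusE_lower (L := L) hP h0 h1
  have := ENNReal.toReal_mono
    (specRadiusE_ne_top (lazy_isTransProb (L := L) hP h0 h1.le)) h
  rwa [ENNReal.toReal_mul, ENNReal.toReal_ofReal (by linarith)] at this

lemma key_est (hP : IsTransProb P) {κ κ' : ℝ} (hκ : 0 ≤ κ) (hle : κ ≤ κ') (hκ'1 : κ' < 1) :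
    |specRadius (lazy P L κ') - specRadius (lazy P L κ)| ≤ (κ' - κ) / (1 - κ) := by
  have hκ1 : κ < 1 := lt_of_le_of_lt hle hκ'1
  have hposκ : (0:ℝ) < 1 - κ := by linarith
  set μ : ℝ := (κ' - κ) / (1 - κ) with hμ
  have h0 : 0 ≤ μ := div_nonneg (by linarith) hposκ.le
  have h1 : μ < 1 := (div_lt_one hposκ).2 (by linarith)
  have hQ : IsTransProb (lazy P L κ) := lazy_isTransProb hP hκ hκ1.le
  have hll : lazy (lazy P L κ) L μ = lazy P L κ' := lazy_lazy hκ1 hμ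
  have hub := real_upper (L := L) hQ h0 h1
  have hlb := real_lower (L := L) hQ h0 h1
  rw [hll] at hub hlb
  have hf0 : 0 ≤ specRadius (lazy P L κ) := specRadius_nonneg _
  have hf1 : specRadius (lazy P L κ) ≤ 1 := specRadius_le_one hQ
  rw [abs_le]
  constructor <;> nlinarith

theorem lazy_specRadius_continuousOn' (hP : IsTransProb P) :
    ContinuousOn (fun κ : ℝ => specRadius (lazy P L κ)) (Set.Ico 0 1) := by
  intro κ0 hκ0
  obtain ⟨h00, h01⟩ := hκ0
  have hd : (0:ℝ) < 1 - κ0 := by linarith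
  have hudist : ∀ κ ∈ Set.Ico (0:ℝ) 1,
      |specRadius (lazy P L κ) - specRadius (lazy P L κ0)| ≤ |κ - κ0| / (1 - κ0) := by
    intro κ hκ
    obtain ⟨hκ0', hκ1'⟩ := hκ
    rcases le_total κ κ0 with h | h
    · have := key_est (L := L) hP hκ0' h h01
      rw [abs_sub_comm]
      refine this.trans ?_
      rw [abs_of_nonpos (by linarith)]
      have h1κ : (0:ℝ) < 1 - κ := by linarith
      rw [div_le_div_iff₀ h1κ hd]
      nlinarith
    · have := key_est (L := L) hP h00 h hκ1'
      refine this.trans ?_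
      rw [abs_of_nonneg (by linarith)]
  rw [Metric.continuousWithinAt_iff]
  intro ε hε
  refine ⟨ε * (1 - κ0), by positivity, fun {κ} hκ hdist => ?_⟩
  have h1 := hudist κ hκ
  have h2 : |κ - κ0| / (1 - κ0) < ε := by
    rw [div_lt_iff₀ hd]
    calc |κ - κ0| = dist κ κ0 := (Real.dist_eq κ κ0).symm
      _ < ε * (1 - κ0) := hdist
  calc dist (specRadius (lazy P L κ)) (specRadius (lazy P L κ0))
      = |specRadius (lazy P L κ) - specRadius (lazy P L κ0)| := Real.dist_eq _ _
    _ < ε := lt_of_le_of_lt h1 h2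

end LazyFinal

theorem lazy_specRadius_continuousOn {S : Type*} [Countable S] [Infinite S] (P : S → S → ℝ)
    (hP : IsTransProb P) (hirr : Irred P)
    (L : Set S) :
    ContinuousOn (fun κ : ℝ => specRadius (lazy P L κ)) (Set.Ico 0 1) :=
  LazyFinal.lazy_specRadius_continuousOn' hP
end

section
/- Suppose ρ < 1, L ⊆ S is nonempty and finite, and P is rho-recurrent. Then for every κ ∈ (0,1), P^L_κ is strictly rho-recurrent. -/
open scoped Classical ENNReal NNReal

variable {S : Type*}

namespace LazyAux

open ENNReal

variable {S : Type*}

noncomputable def pwE (A : S → S → ℝ≥0∞) : ℕ → S → S → ℝ≥0∞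
  | 0, x, y => if x = y then 1 else 0
  | n+1, x, y => ∑' w, A x w * pwE A n w y

noncomputable def urE (A : S → S → ℝ≥0∞) : ℕ → S → S → ℝ≥0∞
  | 0, _, _ => 0
  | 1, x, y => A x y
  | n+2, x, y => ∑' w, if w = y then 0 else A x w * urE A (n+1) w y

lemma pwE_zero (A : S → S → ℝ≥0∞) (x y : S) : pwE A 0 x y = if x = y then 1 else 0 := rfl
lemma pwE_succ (A : S → S → ℝ≥0∞) (n : ℕ) (x y : S) :
    pwE A (n+1) x y = ∑' w, A x w * pwE A n w y := rfl
lemma urE_zero (A : S → S → ℝ≥0∞) (x y : S) : urE A 0 x y = 0 := rfl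
lemma urE_one (A : S → S → ℝ≥0∞) (x y : S) : urE A 1 x y = A x y := rfl
lemma urE_succ (A : S → S → ℝ≥0∞) (n : ℕ) (x y : S) :
    urE A (n+2) x y = ∑' w, if w = y then 0 else A x w * urE A (n+1) w y := rfl

lemma pwE_one (A : S → S → ℝ≥0∞) (x y : S) : pwE A 1 x y = A x y := by
  rw [pwE_succ, tsum_eq_single y]
  · simp [pwE_zero]
  · intro w hw; simp [pwE_zero, hw]

lemma tsum_split (f : S → ℝ≥0∞) (y : S) :
    ∑' w, f w = f y + ∑' w, if w = y then 0 else f w := by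
  have h : ∀ w, f w = (if w = y then f y else 0) + (if w = y then 0 else f w) := by
    intro w; by_cases hw : w = y <;> simp [hw]
  calc ∑' w, f w
      = ∑' w, ((if w = y then f y else 0) + (if w = y then 0 else f w)) := tsum_congr h
    _ = _ := by rw [ENNReal.tsum_add, tsum_ite_eq]

lemma urE_le_pwE (A : S → S → ℝ≥0∞) : ∀ (n : ℕ) (x y : S), urE A n x y ≤ pwE A n x y
  | 0, x, y => by simp [urE_zero]
  | 1, x, y => by rw [urE_one, pwE_one]
  | (n+2), x, y => by
      rw [urE_succ, pwE_succ]
      refine ENNReal.tsum_le_tsum fun w => ?_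
      by_cases hw : w = y
      · simp [hw]
      · simp only [hw, if_false]
        exact mul_le_mul_right (urE_le_pwE A (n+1) w y) _

lemma pwE_add (A : S → S → ℝ≥0∞) :
    ∀ (m n : ℕ) (x y : S), pwE A (m + n) x y = ∑' w, pwE A m x w * pwE A n w y
  | 0, n, x, y => by
      rw [Nat.zero_add, tsum_eq_single x]
      · simp [pwE_zero]
      · intro w hw; simp [pwE_zero, (Ne.symm hw : ¬ x = w)]
  | (m+1), n, x, y => by
      have h : m + 1 + n = (m + n) + 1 := by omega
      rw [h, pwE_succ]
      calc ∑' w, A x w * pwE A (m+n) w y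
          = ∑' w, A x w * ∑' v, pwE A m w v * pwE A n v y := by
            exact tsum_congr fun w => by rw [pwE_add A m n w y]
        _ = ∑' w, ∑' v, A x w * (pwE A m w v * pwE A n v y) := by
            exact tsum_congr fun w => ENNReal.tsum_mul_left.symm
        _ = ∑' v, ∑' w, A x w * (pwE A m w v * pwE A n v y) := ENNReal.tsum_comm
        _ = ∑' v, (∑' w, A x w * pwE A m w v) * pwE A n v y := by
            refine tsum_congr fun v => ?_
            rw [← ENNReal.tsum_mul_right]
            exact tsum_congr fun w => (mul_assoc _ _ _).symm
        _ = ∑' v, pwE A (m+1) x v * pwE A n v y := by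
            exact tsum_congr fun v => by rw [pwE_succ]

lemma pwE_renewal (A : S → S → ℝ≥0∞) :
    ∀ n, 1 ≤ n → ∀ x y, pwE A n x y =
      ∑ k ∈ Finset.range (n+1), urE A k x y * pwE A (n-k) y y := by
  intro n hn
  induction n, hn using Nat.le_induction with
  | base =>
      intro x y
      rw [pwE_one, Finset.sum_range_succ, Finset.sum_range_succ, Finset.sum_range_zero]
      simp [urE_zero, urE_one, pwE_zero]
  | succ n hn ih =>
      intro x y
      rw [pwE_succ, tsum_split (fun w => A x w * pwE A n w y) y]
      have hterm : ∀ w : S, (if w = y then 0 else A x w * pwE A n w y)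
          = ∑ k ∈ Finset.range (n+1),
              (if w = y then 0 else A x w * urE A k w y) * pwE A (n-k) y y := by
        intro w
        by_cases hw : w = y
        · simp [hw]
        · simp only [hw, if_false]
          rw [ih w y, Finset.mul_sum]
          exact Finset.sum_congr rfl fun k _ => (mul_assoc _ _ _).symm
      rw [tsum_congr hterm, Summable.tsum_finsetSum (fun k _ => ENNReal.summable)]
      have hswap : ∀ k : ℕ, (∑' w, (if w = y then 0 else A x w * urE A k w y) * pwE A (n-k) y y)
          = (∑' w, if w = y then 0 else A x w * urE A k w y) * pwE A (n-k) y y :=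
        fun k => ENNReal.tsum_mul_right
      rw [Finset.sum_congr rfl (fun k _ => hswap k)]
      -- LHS now: A x y * pwE A n y y + ∑ k in range (n+1), G k * pwE A (n-k) y y
      -- where G k = ∑' w, ite (w=y) 0 (A x w * urE A k w y)
      rw [Finset.sum_range_succ']
      have hG0 : (∑' w, if w = y then 0 else A x w * urE A 0 w y) * pwE A (n-0) y y = 0 := by
        simp [urE_zero]
      rw [hG0, add_zero]
      have hGk : ∀ k : ℕ, (∑' w, if w = y then 0 else A x w * urE A (k+1) w y) = urE A (k+2) x y :=
        fun k => (urE_succ A k x y).symm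
      -- RHS: ∑ k in range (n+2), urE A k x y * pwE A (n+1-k) y y
      rw [Finset.sum_range_succ' (fun k => urE A k x y * pwE A (n+1-k) y y) (n+1)]
      simp only [urE_zero, zero_mul, add_zero]
      rw [Finset.sum_range_succ' (fun k => urE A (k+1) x y * pwE A (n+1-(k+1)) y y) n]
      have e1 : ∀ k : ℕ, n + 1 - (k + 1) = n - k := fun k => Nat.succ_sub_succ n k
      simp only [e1]
      simp only [hGk, urE_one, Nat.sub_zero]
      rw [add_comm]
      congr 1


noncomputable def convE (u : ℕ → ℝ≥0∞) : ℕ → ℕ → ℝ≥0∞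
  | 0, n => if n = 0 then 1 else 0
  | r+1, n => ∑ k ∈ Finset.range (n+1), u k * convE u r (n-k)

lemma convE_zero (u : ℕ → ℝ≥0∞) (n : ℕ) : convE u 0 n = if n = 0 then 1 else 0 := rfl
lemma convE_succ (u : ℕ → ℝ≥0∞) (r n : ℕ) :
    convE u (r+1) n = ∑ k ∈ Finset.range (n+1), u k * convE u r (n-k) := rfl

lemma renewal_tsum_convE (u g : ℕ → ℝ≥0∞) (hu0 : u 0 = 0) (hg0 : g 0 = 1)
    (hren : ∀ n, 1 ≤ n → g n = ∑ k ∈ Finset.range (n+1), u k * g (n-k)) :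
    ∀ n, g n = ∑' r, convE u r n := by
  intro n
  induction n using Nat.strong_induction_on with
  | _ n ih =>
    match n with
    | 0 =>
        rw [hg0, tsum_eq_single 0]
        · rw [convE_zero, if_pos rfl]
        · intro r hr
          match r with
          | 0 => exact absurd rfl hr
          | (r+1) => simp [convE_succ, hu0]
    | (m+1) =>
        rw [hren (m+1) (Nat.succ_le_succ (Nat.zero_le m))]
        rw [Finset.sum_range_succ' (fun k => u k * g (m+1-k)) (m+1)]
        rw [hu0, zero_mul, add_zero]
        have e1 : ∀ k : ℕ, m + 1 - (k + 1) = m - k := fun k => Nat.succ_sub_succ m k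
        simp only [e1]
        have hih : ∀ k ∈ Finset.range (m+1), u (k+1) * g (m-k) = ∑' r, u (k+1) * convE u r (m-k) := by
          intro k hk
          rw [ih (m-k) (by omega), ENNReal.tsum_mul_left]
        rw [Finset.sum_congr rfl hih, ← Summable.tsum_finsetSum (fun k _ => ENNReal.summable)]
        have hconv : ∀ r : ℕ, (∑ k ∈ Finset.range (m+1), u (k+1) * convE u r (m-k)) = convE u (r+1) (m+1) := by
          intro r
          rw [convE_succ]
          rw [Finset.sum_range_succ' (fun k => u k * convE u r (m+1-k)) (m+1)]
          rw [hu0, zero_mul, add_zero]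
          simp only [e1]
        rw [tsum_congr hconv]
        rw [tsum_eq_zero_add' ENNReal.summable (f := fun r => convE u r (m+1))]
        rw [convE_zero, if_neg (Nat.succ_ne_zero m), zero_add]

lemma tsum_conv_mul (f g : ℕ → ℝ≥0∞) :
    ∑' n : ℕ, ∑ k ∈ Finset.range (n+1), f k * g (n-k) = (∑' n, f n) * (∑' n, g n) := by
  have h1 : ∀ n : ℕ, (∑ k ∈ Finset.range (n+1), f k * g (n-k))
      = ∑' k : ℕ, if k ≤ n then f k * g (n-k) else 0 := by
    intro n
    rw [tsum_eq_sum (s := Finset.range (n+1)) (f := fun k => if k ≤ n then f k * g (n-k) else 0)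
      (fun k hk => if_neg (fun hle => hk (Finset.mem_range.mpr (Nat.lt_succ_of_le hle))))]
    refine Finset.sum_congr rfl fun k hk => ?_
    exact (if_pos (Nat.lt_succ_iff.mp (Finset.mem_range.mp hk))).symm
  calc ∑' n:ℕ, ∑ k ∈ Finset.range (n+1), f k * g (n-k)
      = ∑' n:ℕ, ∑' k:ℕ, if k ≤ n then f k * g (n-k) else 0 := tsum_congr h1
    _ = ∑' k:ℕ, ∑' n:ℕ, if k ≤ n then f k * g (n-k) else 0 := ENNReal.tsum_comm
    _ = ∑' k:ℕ, ∑' m:ℕ, f k * g m := by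
        refine tsum_congr fun k => ?_
        rw [← Summable.sum_add_tsum_nat_add' (f := fun n => if k ≤ n then f k * g (n-k) else 0) (k := k)
          ENNReal.summable]
        have h0 : (∑ i ∈ Finset.range k, if k ≤ i then f k * g (i-k) else 0) = 0 :=
          Finset.sum_eq_zero fun i hi => if_neg (by simpa using Finset.mem_range.mp hi |>.not_ge)
        rw [h0, zero_add]
        refine tsum_congr fun m => ?_
        rw [if_pos (Nat.le_add_left k m), Nat.add_sub_cancel]
    _ = (∑' n, f n) * (∑' n, g n) := by
        simp only [ENNReal.tsum_mul_left]
        exact ENNReal.tsum_mul_right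

lemma tsum_convE (u : ℕ → ℝ≥0∞) : ∀ r : ℕ, ∑' n, convE u r n = (∑' n, u n) ^ r
  | 0 => by
      rw [pow_zero, tsum_eq_single 0]
      · rw [convE_zero, if_pos rfl]
      · intro n hn; rw [convE_zero, if_neg hn]
  | (r+1) => by
      calc ∑' n, convE u (r+1) n
          = ∑' n, ∑ k ∈ Finset.range (n+1), u k * convE u r (n-k) := by
            exact tsum_congr fun n => convE_succ u r n
        _ = (∑' n, u n) * (∑' n, convE u r n) := tsum_conv_mul u (fun n => convE u r n)
        _ = (∑' n, u n) ^ (r+1) := by rw [tsum_convE u r, pow_succ, mul_comm]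

noncomputable def GGE (A : S → S → ℝ≥0∞) (x y : S) : ℝ≥0∞ := ∑' n, pwE A n x y
noncomputable def UUE (A : S → S → ℝ≥0∞) (x y : S) : ℝ≥0∞ := ∑' n, urE A n x y

lemma GGE_eq_geom (A : S → S → ℝ≥0∞) (x : S) : GGE A x x = ∑' r : ℕ, (UUE A x x) ^ r := by
  have h := renewal_tsum_convE (fun k => urE A k x x) (fun n => pwE A n x x)
    (urE_zero A x x) (by show pwE A 0 x x = 1; rw [pwE_zero, if_pos rfl]) (fun n hn => pwE_renewal A n hn x x)
  calc GGE A x x = ∑' n, ∑' r, convE (fun k => urE A k x x) r n := tsum_congr h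
    _ = ∑' r, ∑' n, convE (fun k => urE A k x x) r n := ENNReal.tsum_comm
    _ = ∑' r, (UUE A x x) ^ r := tsum_congr (tsum_convE (fun k => urE A k x x))

lemma GGE_eq_top_iff (A : S → S → ℝ≥0∞) (x : S) : GGE A x x = ∞ ↔ 1 ≤ UUE A x x := by
  rw [GGE_eq_geom, ENNReal.tsum_geometric, ENNReal.inv_eq_top, tsub_eq_zero_iff_le]

lemma GGE_ne_top_iff (A : S → S → ℝ≥0∞) (x : S) : GGE A x x ≠ ∞ ↔ UUE A x x < 1 := by
  rw [← not_le (b := UUE A x x), not_iff_not]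
  exact GGE_eq_top_iff A x

lemma GGE_eq_top_of_comm (A : S → S → ℝ≥0∞) (x y : S) (m k : ℕ)
    (hm : pwE A m y x ≠ 0) (hk : pwE A k x y ≠ 0)
    (hG : GGE A x x = ∞) : GGE A y y = ∞ := by
  have hle : ∀ n : ℕ, (pwE A m y x * pwE A k x y) * pwE A n x x ≤ pwE A (m + n + k) y y := by
    intro n
    have h1 : pwE A (m+n) y x ≥ pwE A m y x * pwE A n x x := by
      rw [pwE_add A m n y x]; exact ENNReal.le_tsum x
    have h2 : pwE A (m+n+k) y y ≥ pwE A (m+n) y x * pwE A k x y := by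
      rw [pwE_add A (m+n) k y y]; exact ENNReal.le_tsum x
    calc (pwE A m y x * pwE A k x y) * pwE A n x x
        = (pwE A m y x * pwE A n x x) * pwE A k x y := by ring
      _ ≤ pwE A (m+n) y x * pwE A k x y := mul_le_mul_left h1 _
      _ ≤ pwE A (m+n+k) y y := h2
  have htop : (pwE A m y x * pwE A k x y) * GGE A x x = ∞ := by
    rw [hG, ENNReal.mul_top (mul_ne_zero hm hk)]
  have : (∞ : ℝ≥0∞) ≤ GGE A y y := by
    calc (∞ : ℝ≥0∞) = (pwE A m y x * pwE A k x y) * GGE A x x := htop.symm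
      _ = ∑' n, (pwE A m y x * pwE A k x y) * pwE A n x x := ENNReal.tsum_mul_left.symm
      _ ≤ ∑' n, pwE A (m + n + k) y y := ENNReal.tsum_le_tsum hle
      _ ≤ ∑' n, pwE A n y y :=
          tsum_comp_le_tsum_of_injective (f := fun n : ℕ => m + n + k)
            (fun a b hab => by dsimp at hab; omega) (fun n => pwE A n y y)
      _ = GGE A y y := rfl
  exact top_le_iff.mp this

noncomputable def SUE (A : S → S → ℝ≥0∞) (x : S) (N : ℕ) (w : S) : ℝ≥0∞ :=
  ∑ n ∈ Finset.range N, urE A n w x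

lemma SUE_zero (A : S → S → ℝ≥0∞) (x w : S) : SUE A x 0 w = 0 := rfl

lemma SUE_one (A : S → S → ℝ≥0∞) (x w : S) : SUE A x 1 w = 0 := by
  simp [SUE, urE_zero]

lemma SUE_succ_succ (A : S → S → ℝ≥0∞) (x : S) (M : ℕ) (w : S) :
    SUE A x (M+2) w = A w x + ∑' v, if v = x then 0 else A w v * SUE A x (M+1) v := by
  have h1 : SUE A x (M+2) w = ∑ n ∈ Finset.range (M+1), urE A (n+1) w x := by
    rw [SUE, Finset.sum_range_succ' (fun n => urE A n w x) (M+1), urE_zero, add_zero]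
  rw [h1, Finset.sum_range_succ' (fun n => urE A (n+1) w x) M, urE_one, add_comm]
  congr 1
  calc ∑ n ∈ Finset.range M, urE A (n+1+1) w x
      = ∑ n ∈ Finset.range M, ∑' v, if v = x then 0 else A w v * urE A (n+1) v x :=
        Finset.sum_congr rfl fun n _ => urE_succ A (n+1-1) w x
    _ = ∑' v, ∑ n ∈ Finset.range M, if v = x then 0 else A w v * urE A (n+1) v x :=
        (Summable.tsum_finsetSum (fun n _ => ENNReal.summable)).symm
    _ = ∑' v, if v = x then 0 else A w v * SUE A x (M+1) v := by
        refine tsum_congr fun v => ?_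
        by_cases hv : v = x
        · simp [hv]
        · simp only [hv, if_false]
          rw [← Finset.mul_sum]
          congr 1
          rw [SUE, Finset.sum_range_succ' (fun n => urE A n v x) M, urE_zero, add_zero]

lemma UUE_eq_iSup_SUE (A : S → S → ℝ≥0∞) (w x : S) : UUE A w x = ⨆ N, SUE A x N w :=
  ENNReal.tsum_eq_iSup_nat

lemma SUE_le_UUE (A : S → S → ℝ≥0∞) (x : S) (N : ℕ) (w : S) : SUE A x N w ≤ UUE A w x := by
  rw [UUE_eq_iSup_SUE]; exact le_iSup (fun N => SUE A x N w) N

lemma UUE_fixed (A : S → S → ℝ≥0∞) (w x : S) :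
    UUE A w x = A w x + ∑' v, if v = x then 0 else A w v * UUE A v x := by
  have hshift : ∀ v : S, ∑' n, urE A (n+1) v x = UUE A v x := by
    intro v
    rw [UUE]
    conv_rhs => rw [tsum_eq_zero_add' ENNReal.summable]
    rw [urE_zero, zero_add]
  rw [UUE, tsum_eq_zero_add' ENNReal.summable, urE_zero, zero_add,
    tsum_eq_zero_add' ENNReal.summable, urE_one]
  congr 1
  calc ∑' n, urE A (n+1+1) w x
      = ∑' n, ∑' v, if v = x then 0 else A w v * urE A (n+1) v x :=
        tsum_congr fun n => urE_succ A n w x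
    _ = ∑' v, ∑' n, if v = x then 0 else A w v * urE A (n+1) v x := ENNReal.tsum_comm
    _ = ∑' v, if v = x then 0 else A w v * UUE A v x := by
        refine tsum_congr fun v => ?_
        by_cases hv : v = x
        · simp [hv]
        · simp only [hv, if_false]
          rw [ENNReal.tsum_mul_left, hshift v]

noncomputable def scE (A : S → S → ℝ≥0∞) (z : ℝ≥0∞) : S → S → ℝ≥0∞ := fun v w => A v w * z

lemma pwE_scE (A : S → S → ℝ≥0∞) (z : ℝ≥0∞) :
    ∀ (n : ℕ) (x y : S), pwE (scE A z) n x y = pwE A n x y * z ^ n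
  | 0, x, y => by rw [pwE_zero, pwE_zero, pow_zero, mul_one]
  | (n+1), x, y => by
      rw [pwE_succ, pwE_succ, ← ENNReal.tsum_mul_right]
      refine tsum_congr fun w => ?_
      rw [pwE_scE A z n w y]
      show A x w * z * (pwE A n w y * z ^ n) = A x w * pwE A n w y * z ^ (n+1)
      ring

lemma urE_scE (A : S → S → ℝ≥0∞) (z : ℝ≥0∞) :
    ∀ (n : ℕ) (x y : S), urE (scE A z) n x y = urE A n x y * z ^ n
  | 0, x, y => by rw [urE_zero, urE_zero, zero_mul]
  | 1, x, y => by rw [urE_one, urE_one, pow_one]; rfl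
  | (n+2), x, y => by
      rw [urE_succ, urE_succ, ← ENNReal.tsum_mul_right]
      refine tsum_congr fun w => ?_
      by_cases hw : w = y
      · simp [hw]
      · simp only [hw, if_false]
        rw [urE_scE A z (n+1) w y]
        show A x w * z * (urE A (n+1) w y * z ^ (n+1)) = A x w * urE A (n+1) w y * z ^ (n+2)
        ring

lemma pwE_rowsum (A : S → S → ℝ≥0∞) (hA : ∀ v, ∑' w, A v w = 1) :
    ∀ (n : ℕ) (x : S), ∑' y, pwE A n x y = 1
  | 0, x => by
      rw [tsum_eq_single x]
      · rw [pwE_zero, if_pos rfl]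
      · intro y hy; rw [pwE_zero, if_neg (Ne.symm hy)]
  | (n+1), x => by
      calc ∑' y, pwE A (n+1) x y = ∑' y, ∑' w, A x w * pwE A n w y :=
            tsum_congr fun y => pwE_succ A n x y
        _ = ∑' w, ∑' y, A x w * pwE A n w y := ENNReal.tsum_comm
        _ = ∑' w, A x w * ∑' y, pwE A n w y := tsum_congr fun w => ENNReal.tsum_mul_left
        _ = ∑' w, A x w := by
            refine tsum_congr fun w => ?_
            rw [pwE_rowsum A hA n w, mul_one]
        _ = 1 := hA x

lemma pwE_le_one (A : S → S → ℝ≥0∞) (hA : ∀ v, ∑' w, A v w = 1) (n : ℕ) (x y : S) :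
    pwE A n x y ≤ 1 := by
  rw [← pwE_rowsum A hA n x]
  exact ENNReal.le_tsum y


section Bridge

variable {S : Type*}

noncomputable def ofR (W : S → S → ℝ) : S → S → ℝ≥0∞ := fun v w => ENNReal.ofReal (W v w)

lemma ofR_rowsum {W : S → S → ℝ} (hW : IsTransProb W) : ∀ v, ∑' w, ofR W v w = 1 := by
  intro v
  have hs := (hW.2 v).summable
  simp only [ofR]
  rw [← ENNReal.ofReal_tsum_of_nonneg (hW.1 v) hs, (hW.2 v).tsum_eq, ENNReal.ofReal_one]

lemma kpow_bridge {W : S → S → ℝ} (hW : IsTransProb W) :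
    ∀ (n : ℕ) (x y : S), 0 ≤ kpow W n x y ∧ ENNReal.ofReal (kpow W n x y) = pwE (ofR W) n x y
  | 0, x, y => by
      constructor
      · show (0:ℝ) ≤ if x = y then 1 else 0
        split <;> norm_num
      · show ENNReal.ofReal (if x = y then (1:ℝ) else 0) = if x = y then 1 else 0
        split <;> simp
  | (n+1), x, y => by
      have hnn : ∀ w, 0 ≤ W x w * kpow W n w y :=
        fun w => mul_nonneg (hW.1 x w) (kpow_bridge hW n w y).1
      have hb : ∀ w, kpow W n w y ≤ 1 := by
        intro w
        have h2 := (kpow_bridge hW n w y).2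
        have h3 : pwE (ofR W) n w y ≤ 1 := pwE_le_one (ofR W) (ofR_rowsum hW) n w y
        rw [← h2] at h3
        exact ENNReal.ofReal_le_one.mp h3
      have hsum : Summable fun w => W x w * kpow W n w y := by
        refine Summable.of_nonneg_of_le hnn (fun w => ?_) (hW.2 x).summable
        exact mul_le_of_le_one_right (hW.1 x w) (hb w)
      constructor
      · exact tsum_nonneg hnn
      · show ENNReal.ofReal (∑' w, W x w * kpow W n w y) = ∑' w, ofR W x w * pwE (ofR W) n w y
        rw [ENNReal.ofReal_tsum_of_nonneg hnn hsum]
        refine tsum_congr fun w => ?_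
        rw [ENNReal.ofReal_mul (hW.1 x w), (kpow_bridge hW n w y).2]
        rfl

lemma kpow_nonneg_s8 {W : S → S → ℝ} (hW : IsTransProb W) (n : ℕ) (x y : S) :
    0 ≤ kpow W n x y := (kpow_bridge hW n x y).1

lemma kpow_eq {W : S → S → ℝ} (hW : IsTransProb W) (n : ℕ) (x y : S) :
    ENNReal.ofReal (kpow W n x y) = pwE (ofR W) n x y := (kpow_bridge hW n x y).2

lemma kpow_le_one_s8 {W : S → S → ℝ} (hW : IsTransProb W) (n : ℕ) (x y : S) :
    kpow W n x y ≤ 1 := by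
  have h3 : pwE (ofR W) n x y ≤ 1 := pwE_le_one (ofR W) (ofR_rowsum hW) n x y
  rw [← kpow_eq hW] at h3
  exact ENNReal.ofReal_le_one.mp h3

lemma fret_bridge {W : S → S → ℝ} (hW : IsTransProb W) :
    ∀ (n : ℕ) (x y : S), 0 ≤ fret W n x y ∧ ENNReal.ofReal (fret W n x y) = urE (ofR W) n x y
  | 0, x, y => by
      constructor
      · exact le_refl 0
      · show ENNReal.ofReal (0:ℝ) = 0
        simp
  | 1, x, y => ⟨hW.1 x y, rfl⟩
  | (n+2), x, y => by
      have hnn : ∀ w, (0:ℝ) ≤ if w = y then 0 else W x w * fret W (n+1) w y := by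
        intro w
        split
        · exact le_refl 0
        · exact mul_nonneg (hW.1 x w) (fret_bridge hW (n+1) w y).1
      have hb : ∀ w, fret W (n+1) w y ≤ 1 := by
        intro w
        have h2 := (fret_bridge hW (n+1) w y).2
        have h3 : urE (ofR W) (n+1) w y ≤ 1 :=
          le_trans (urE_le_pwE (ofR W) (n+1) w y) (pwE_le_one (ofR W) (ofR_rowsum hW) (n+1) w y)
        rw [← h2] at h3
        exact ENNReal.ofReal_le_one.mp h3
      have hsum : Summable fun w => if w = y then (0:ℝ) else W x w * fret W (n+1) w y := by
        refine Summable.of_nonneg_of_le hnn (fun w => ?_) (hW.2 x).summable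
        split
        · exact hW.1 x w
        · exact mul_le_of_le_one_right (hW.1 x w) (hb w)
      constructor
      · exact tsum_nonneg hnn
      · show ENNReal.ofReal (∑' w, if w = y then (0:ℝ) else W x w * fret W (n+1) w y)
          = ∑' w, if w = y then 0 else ofR W x w * urE (ofR W) (n+1) w y
        rw [ENNReal.ofReal_tsum_of_nonneg hnn hsum]
        refine tsum_congr fun w => ?_
        by_cases hwy : w = y
        · simp [hwy]
        · simp only [hwy, if_false]
          rw [ENNReal.ofReal_mul (hW.1 x w), (fret_bridge hW (n+1) w y).2]
          rfl

lemma fret_nonneg {W : S → S → ℝ} (hW : IsTransProb W) (n : ℕ) (x y : S) :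
    0 ≤ fret W n x y := (fret_bridge hW n x y).1

lemma green_bridge {W : S → S → ℝ} (hW : IsTransProb W) (x y : S) {z : ℝ} (hz : 0 ≤ z) :
    green W x y z = GGE (scE (ofR W) (ENNReal.ofReal z)) x y := by
  rw [green, GGE]
  refine tsum_congr fun n => ?_
  rw [pwE_scE, ENNReal.ofReal_mul (kpow_nonneg_s8 hW n x y), kpow_eq hW,
    ENNReal.ofReal_pow hz]

lemma Ufun_bridge {W : S → S → ℝ} (hW : IsTransProb W) (x y : S) {z : ℝ} (hz : 0 ≤ z) :
    Ufun W x y z = UUE (scE (ofR W) (ENNReal.ofReal z)) x y := by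
  rw [Ufun, UUE]
  refine tsum_congr fun n => ?_
  rw [urE_scE, ENNReal.ofReal_mul (fret_nonneg hW n x y), (fret_bridge hW n x y).2,
    ENNReal.ofReal_pow hz]

lemma summable_iff_ofReal_ne_top (a : ℕ → ℝ) (ha : ∀ n, 0 ≤ a n) :
    Summable a ↔ ∑' n, ENNReal.ofReal (a n) ≠ ∞ := by
  constructor
  · intro h
    rw [← ENNReal.ofReal_tsum_of_nonneg ha h]
    exact ENNReal.ofReal_ne_top
  · intro h
    refine (ENNReal.summable_toReal h).congr fun n => ?_
    exact ENNReal.toReal_ofReal (ha n)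

lemma green_ne_top_iff_summable {W : S → S → ℝ} (hW : IsTransProb W) (x y : S) {z : ℝ}
    (hz : 0 ≤ z) : green W x y z ≠ ∞ ↔ Summable (fun n => kpow W n x y * z ^ n) := by
  rw [green, (summable_iff_ofReal_ne_top _
    (fun n => mul_nonneg (kpow_nonneg_s8 hW n x y) (pow_nonneg hz n)))]

lemma Ufun_ne_top_iff_summable {W : S → S → ℝ} (hW : IsTransProb W) (x y : S) {z : ℝ}
    (hz : 0 ≤ z) : Ufun W x y z ≠ ∞ ↔ Summable (fun n => fret W n x y * z ^ n) := by
  rw [Ufun, (summable_iff_ofReal_ne_top _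
    (fun n => mul_nonneg (fret_nonneg hW n x y) (pow_nonneg hz n)))]

lemma convRadius_ge (a : ℕ → ℝ) (z : ℝ≥0) (h : Summable fun n => a n * (z:ℝ)^n) :
    (z : ℝ≥0∞) ≤ convRadius a :=
  le_iSup₂ (f := fun (z : ℝ≥0) (_ : Summable fun n => a n * (z:ℝ)^n) => (z : ℝ≥0∞)) z h

lemma summable_of_le_of_summable (a : ℕ → ℝ) (ha : ∀ n, 0 ≤ a n) {u v : ℝ} (hu : 0 ≤ u)
    (h : u ≤ v) (hs : Summable fun n => a n * v^n) : Summable fun n => a n * u^n :=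
  hs.of_nonneg_of_le (fun n => mul_nonneg (ha n) (pow_nonneg hu n))
    (fun n => mul_le_mul_of_nonneg_left (pow_le_pow_left₀ hu h n) (ha n))

lemma convRadius_le (a : ℕ → ℝ) (ha : ∀ n, 0 ≤ a n) (z0 : ℝ≥0)
    (h : ¬ Summable fun n => a n * (z0:ℝ)^n) : convRadius a ≤ z0 := by
  refine iSup₂_le fun z hz => ?_
  by_contra hlt
  push_neg at hlt
  have hle : (z0:ℝ) ≤ (z:ℝ) := by exact_mod_cast le_of_lt (ENNReal.coe_lt_coe.mp hlt)
  exact h (summable_of_le_of_summable a ha z0.2 hle hz)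

lemma exists_summable_of_lt (a : ℕ → ℝ) {c : ℝ≥0∞} (h : c < convRadius a) :
    ∃ z : ℝ≥0, (Summable fun n => a n * (z:ℝ)^n) ∧ c < (z:ℝ≥0∞) := by
  rw [convRadius, lt_iSup_iff] at h
  obtain ⟨z, hz⟩ := h
  by_cases hs : Summable fun n => a n * (z:ℝ)^n
  · refine ⟨z, hs, ?_⟩
    simpa [hs] using hz
  · rw [iSup_neg hs] at hz
    exact absurd hz (by simp)

lemma one_le_convRadius (a : ℕ → ℝ) (ha0 : ∀ n, 0 ≤ a n) (ha1 : ∀ n, a n ≤ 1) :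
    1 ≤ convRadius a := by
  by_contra h
  push_neg at h
  obtain ⟨r, hr1, hr2⟩ := ENNReal.lt_iff_exists_nnreal_btwn.mp h
  have hrlt1 : (r:ℝ) < 1 := by exact_mod_cast ENNReal.coe_lt_coe.mp (by simpa using hr2)
  have hs : Summable fun n => a n * (r:ℝ)^n := by
    refine Summable.of_nonneg_of_le (fun n => mul_nonneg (ha0 n) (pow_nonneg r.2 n))
      (fun n => mul_le_of_le_one_left (pow_nonneg r.2 n) (ha1 n))
      (summable_geometric_of_lt_one r.2 hrlt1)
  exact absurd (convRadius_ge a r hs) (not_le.mpr hr1)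

end Bridge

section LazyBasic

variable {S : Type*}

lemma lazy_isTransProb {P : S → S → ℝ} (hP : IsTransProb P) (L : Set S) {κ : ℝ}
    (hκ0 : 0 ≤ κ) (hκ1 : κ ≤ 1) : IsTransProb (lazy P L κ) := by
  constructor
  · intro x y
    rw [lazy]
    split
    · refine add_nonneg ?_ (mul_nonneg (by linarith) (hP.1 x y))
      split <;> simp [hκ0]
    · exact hP.1 x y
  · intro x
    by_cases hx : x ∈ L
    · have hfun : (lazy P L κ x) = fun y => (if y = x then κ else 0) + (1-κ) * P x y := by
        funext y
        show lazy P L κ x y = _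
        rw [lazy, if_pos hx]
        congr 1
        by_cases h : y = x
        · simp [h]
        · simp [h, Ne.symm h]
      have h2 : HasSum (fun y => (if y = x then κ else 0) + (1-κ) * P x y) (κ + (1-κ)*1) :=
        (hasSum_ite_eq x κ).add ((hP.2 x).mul_left (1-κ))
      have h3 : κ + (1-κ)*1 = 1 := by ring
      rw [h3] at h2
      rw [hfun]
      exact h2
    · have h4 : (lazy P L κ) x = P x := by
        funext y; rw [lazy, if_neg hx]
      rw [h4]; exact hP.2 x

lemma lazy_ge {P : S → S → ℝ} (hP : IsTransProb P) (L : Set S) {κ : ℝ}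
    (hκ0 : 0 ≤ κ) (hκ1 : κ ≤ 1) (x y : S) : (1-κ) * P x y ≤ lazy P L κ x y := by
  rw [lazy]
  split
  · refine le_add_of_nonneg_left ?_
    split <;> simp [hκ0]
  · nlinarith [hP.1 x y]

lemma kpow_lazy_ge {P : S → S → ℝ} (hP : IsTransProb P) (L : Set S) {κ : ℝ}
    (hκ0 : 0 ≤ κ) (hκ1 : κ < 1) :
    ∀ (n : ℕ) (x y : S), (1-κ)^n * kpow P n x y ≤ kpow (lazy P L κ) n x y
  | 0, x, y => by
      rw [pow_zero, one_mul]
      exact le_of_eq rfl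
  | (n+1), x, y => by
      have hQ : IsTransProb (lazy P L κ) := lazy_isTransProb hP L hκ0 hκ1.le
      have hterm : ∀ w, (1-κ)^(n+1) * (P x w * kpow P n w y)
          ≤ lazy P L κ x w * kpow (lazy P L κ) n w y := by
        intro w
        have h1 : (1-κ)^(n+1) * (P x w * kpow P n w y)
            = ((1-κ) * P x w) * ((1-κ)^n * kpow P n w y) := by ring
        rw [h1]
        refine mul_le_mul (lazy_ge hP L hκ0 hκ1.le x w) (kpow_lazy_ge hP L hκ0 hκ1 n w y)
          (mul_nonneg (pow_nonneg (by linarith) n) (kpow_nonneg_s8 hP n w y))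
          (hQ.1 x w)
      have hsum1 : Summable fun w => (1-κ)^(n+1) * (P x w * kpow P n w y) := by
        refine Summable.mul_left _ ?_
        refine Summable.of_nonneg_of_le
          (fun w => mul_nonneg (hP.1 x w) (kpow_nonneg_s8 hP n w y))
          (fun w => mul_le_of_le_one_right (hP.1 x w) (kpow_le_one_s8 hP n w y)) (hP.2 x).summable
      have hsum2 : Summable fun w => lazy P L κ x w * kpow (lazy P L κ) n w y := by
        refine Summable.of_nonneg_of_le
          (fun w => mul_nonneg (hQ.1 x w) (kpow_nonneg_s8 hQ n w y))
          (fun w => mul_le_of_le_one_right (hQ.1 x w) (kpow_le_one_s8 hQ n w y)) (hQ.2 x).summable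
      calc (1-κ)^(n+1) * kpow P (n+1) x y
          = ∑' w, (1-κ)^(n+1) * (P x w * kpow P n w y) := by
            rw [show kpow P (n+1) x y = ∑' w, P x w * kpow P n w y from rfl, tsum_mul_left]
        _ ≤ ∑' w, lazy P L κ x w * kpow (lazy P L κ) n w y := Summable.tsum_le_tsum hterm hsum1 hsum2
        _ = kpow (lazy P L κ) (n+1) x y := rfl

lemma lazy_irred {P : S → S → ℝ} (hP : IsTransProb P) (hirr : Irred P) (L : Set S) {κ : ℝ}
    (hκ0 : 0 ≤ κ) (hκ1 : κ < 1) : Irred (lazy P L κ) := by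
  intro x y
  obtain ⟨n, hn⟩ := hirr x y
  exact ⟨n, lt_of_lt_of_le (mul_pos (pow_pos (by linarith) n) hn) (kpow_lazy_ge hP L hκ0 hκ1 n x y)⟩

lemma lazy_insert (P : S → S → ℝ) (L : Set S) (a : S) (ha : a ∉ L) (κ : ℝ) :
    lazy P (insert a L) κ = lazy (lazy P L κ) {a} κ := by
  funext x y
  by_cases hxa : x = a
  · subst hxa
    simp [lazy, Set.mem_insert_iff, ha]
  · by_cases hxL : x ∈ L
    · simp [lazy, hxa, hxL, Set.mem_insert_iff]
    · simp [lazy, hxa, hxL, Set.mem_insert_iff]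

lemma lazy_empty (P : S → S → ℝ) (κ : ℝ) : lazy P (∅ : Set S) κ = P := by
  funext x y
  simp [lazy]

end LazyBasic

section Spec

variable {S : Type*}

lemma ofReal_ne_zero_of_pos {p : ℝ} (hp : 0 < p) : ENNReal.ofReal p ≠ 0 := by
  simp [ENNReal.ofReal_eq_zero, not_le, hp]

lemma green_top_solidarity {W : S → S → ℝ} (hW : IsTransProb W) (hirr : Irred W)
    (x y : S) {z : ℝ} (hz : 0 < z) (h : green W x x z = ∞) : green W y y z = ∞ := by
  obtain ⟨m, hm⟩ := hirr y x
  obtain ⟨k, hk⟩ := hirr x y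
  rw [green_bridge hW x x hz.le] at h
  rw [green_bridge hW y y hz.le]
  refine GGE_eq_top_of_comm _ x y m k ?_ ?_ h
  · rw [pwE_scE]
    refine mul_ne_zero ?_ (pow_ne_zero m (ofReal_ne_zero_of_pos hz))
    rw [← kpow_eq hW]
    exact ofReal_ne_zero_of_pos hm
  · rw [pwE_scE]
    refine mul_ne_zero ?_ (pow_ne_zero k (ofReal_ne_zero_of_pos hz))
    rw [← kpow_eq hW]
    exact ofReal_ne_zero_of_pos hk

noncomputable def sC (W : S → S → ℝ) (x : S) : ℝ≥0∞ := convRadius fun n => kpow W n x x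

lemma one_le_sC {W : S → S → ℝ} (hW : IsTransProb W) (x : S) : 1 ≤ sC W x :=
  one_le_convRadius _ (fun n => kpow_nonneg_s8 hW n x x) (fun n => kpow_le_one_s8 hW n x x)

lemma sC_solidarity {W : S → S → ℝ} (hW : IsTransProb W) (hirr : Irred W) (x y : S) :
    sC W x = sC W y := by
  have key : ∀ u v : S, sC W u ≤ sC W v := by
    intro u v
    refine iSup₂_le fun z hz => ?_
    rcases le_or_gt (z:ℝ≥0∞) 1 with h1 | h1
    · exact le_trans h1 (one_le_sC hW v)
    · have hz1 : (1:ℝ≥0) < z := ENNReal.one_lt_coe_iff.mp h1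
      have hz0 : (0:ℝ) < (z:ℝ) := lt_trans one_pos (by exact_mod_cast hz1)
      have hgu : green W u u (z:ℝ) ≠ ∞ := (green_ne_top_iff_summable hW u u hz0.le).mpr hz
      have hgv : green W v v (z:ℝ) ≠ ∞ :=
        fun htop => hgu (green_top_solidarity hW hirr v u hz0 htop)
      exact convRadius_ge _ z ((green_ne_top_iff_summable hW v v hz0.le).mp hgv)
  exact le_antisymm (key x y) (key y x)

lemma specRadiusE_eq_inv_sC {W : S → S → ℝ} (hW : IsTransProb W) (hirr : Irred W) (x : S) :
    specRadiusE W = (sC W x)⁻¹ := by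
  haveI : Nonempty S := ⟨x⟩
  rw [specRadiusE]
  have h : ∀ y : S, (convRadius fun n => kpow W n y y)⁻¹ = (sC W x)⁻¹ := by
    intro y
    rw [show (convRadius fun n => kpow W n y y) = sC W y from rfl, sC_solidarity hW hirr y x]
  rw [iSup_congr h]
  exact iSup_const

end Spec

section SingleState

variable {S : Type*}

lemma urE_eq_of_rows_eq (A C : S → S → ℝ≥0∞) (x : S)
    (hrows : ∀ v, v ≠ x → A v = C v) :
    ∀ (n : ℕ) (w : S), w ≠ x → urE A n w x = urE C n w x
  | 0, _, _ => rfl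
  | 1, w, hw => by rw [urE_one, urE_one, hrows w hw]
  | (n+2), w, hw => by
      rw [urE_succ, urE_succ]
      refine tsum_congr fun v => ?_
      by_cases hv : v = x
      · simp [hv]
      · simp only [hv, if_false]
        rw [hrows w hw, urE_eq_of_rows_eq A C x hrows (n+1) v hv]

lemma UUE_split_two (D : S → S → ℝ≥0∞) (a : S) :
    UUE D a a = urE D 1 a a + ∑' n, urE D (n+2) a a := by
  rw [UUE, tsum_eq_zero_add' ENNReal.summable, urE_zero, zero_add,
    tsum_eq_zero_add' (f := fun n => urE D (n+1) a a) ENNReal.summable]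

lemma UUE_lazy_single {P : S → S → ℝ} (hP : IsTransProb P) (a : S) {κ : ℝ}
    (hκ0 : 0 ≤ κ) (hκ1 : κ ≤ 1) (z : ℝ≥0∞) :
    UUE (scE (ofR (lazy P {a} κ)) z) a a
      = ENNReal.ofReal κ * z + ENNReal.ofReal (1-κ) * UUE (scE (ofR P) z) a a := by
  set A := scE (ofR (lazy P {a} κ)) z with hA
  set C := scE (ofR P) z with hC
  have hrows : ∀ v, v ≠ a → A v = C v := by
    intro v hv
    funext w
    show ofR (lazy P {a} κ) v w * z = ofR P v w * z
    congr 1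
    show ENNReal.ofReal (lazy P {a} κ v w) = ENNReal.ofReal (P v w)
    rw [lazy, if_neg (by simpa using hv)]
  have h1 : urE A 1 a a = ENNReal.ofReal κ * z + ENNReal.ofReal (1-κ) * urE C 1 a a := by
    rw [urE_one, urE_one]
    show ofR (lazy P {a} κ) a a * z = _
    have hval : lazy P {a} κ a a = κ + (1-κ) * P a a := by
      rw [lazy, if_pos (Set.mem_singleton a), if_pos rfl]
    rw [show ofR (lazy P {a} κ) a a = ENNReal.ofReal (lazy P {a} κ a a) from rfl, hval,
      ENNReal.ofReal_add hκ0 (mul_nonneg (by linarith) (hP.1 a a)),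
      ENNReal.ofReal_mul (by linarith : (0:ℝ) ≤ 1-κ)]
    show (ENNReal.ofReal κ + ENNReal.ofReal (1-κ) * ENNReal.ofReal (P a a)) * z
      = ENNReal.ofReal κ * z + ENNReal.ofReal (1-κ) * (ofR P a a * z)
    rw [add_mul, mul_assoc]
    rfl
  have h2 : ∀ n : ℕ, urE A (n+2) a a = ENNReal.ofReal (1-κ) * urE C (n+2) a a := by
    intro n
    rw [urE_succ, urE_succ, ← ENNReal.tsum_mul_left]
    refine tsum_congr fun v => ?_
    by_cases hv : v = a
    · simp [hv]
    · simp only [hv, if_false]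
      rw [urE_eq_of_rows_eq A C a hrows (n+1) v hv]
      have hAv : A a v = ENNReal.ofReal (1-κ) * C a v := by
        show ofR (lazy P {a} κ) a v * z = ENNReal.ofReal (1-κ) * (ofR P a v * z)
        have hval : lazy P {a} κ a v = (1-κ) * P a v := by
          rw [lazy, if_pos (Set.mem_singleton a), if_neg (fun h => hv h.symm), zero_add]
        rw [show ofR (lazy P {a} κ) a v = ENNReal.ofReal (lazy P {a} κ a v) from rfl, hval,
          ENNReal.ofReal_mul (by linarith : (0:ℝ) ≤ 1-κ)]
        show ENNReal.ofReal (1-κ) * ENNReal.ofReal (P a v) * z = _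
        rw [mul_assoc]
        rfl
      rw [hAv, mul_assoc]
  rw [UUE_split_two A a, UUE_split_two C a, h1, tsum_congr h2, ENNReal.tsum_mul_left]
  ring

end SingleState

section RCcont

lemma tendsto_tsum_pow_nhdsWithin_Ioi (c : ℕ → ℝ) (hc : ∀ n, 0 ≤ c n) {zb s : ℝ}
    (hs : 0 ≤ s) (hlt : s < zb) (hsum : Summable fun n => c n * zb ^ n) :
    Filter.Tendsto (fun z : ℝ => ∑' n, c n * z ^ n)
      (nhdsWithin s (Set.Ioi s)) (nhds (∑' n, c n * s ^ n)) := by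
  set z2 := (s + zb)/2 with hz2
  have hz2a : s < z2 := by rw [hz2]; linarith
  have hz2b : z2 < zb := by rw [hz2]; linarith
  have hz2nonneg : 0 ≤ z2 := le_trans hs hz2a.le
  set clamp : ℝ → ℝ := fun t => min (max t 0) z2 with hclamp
  have hclamp_cont : Continuous clamp := (continuous_id.max continuous_const).min continuous_const
  have hb : Summable fun n => c n * z2 ^ n :=
    summable_of_le_of_summable _ hc hz2nonneg hz2b.le hsum
  have hcont : Continuous fun t : ℝ => ∑' n, c n * (clamp t) ^ n := by
    refine continuous_tsum (fun n => continuous_const.mul (hclamp_cont.pow n)) hb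
      (fun n t => ?_)
    have h0 : 0 ≤ clamp t := le_min (le_max_right t 0) hz2nonneg
    have h1 : clamp t ≤ z2 := min_le_right _ _
    rw [Real.norm_eq_abs, abs_of_nonneg (mul_nonneg (hc n) (pow_nonneg h0 n))]
    exact mul_le_mul_of_nonneg_left (pow_le_pow_left₀ h0 h1 n) (hc n)
  have hclamp_s : clamp s = s := by
    rw [hclamp]
    show min (max s 0) z2 = s
    rw [max_eq_left hs, min_eq_left hz2a.le]
  have htend : Filter.Tendsto (fun t : ℝ => ∑' n, c n * (clamp t) ^ n)
      (nhdsWithin s (Set.Ioi s)) (nhds (∑' n, c n * s ^ n)) := by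
    have := hcont.tendsto s
    rw [hclamp_s] at this
    exact this.mono_left nhdsWithin_le_nhds
  refine htend.congr' ?_
  filter_upwards [Ioo_mem_nhdsGT hz2a] with t ht
  have h1 : clamp t = t := by
    rw [hclamp]
    show min (max t 0) z2 = t
    rw [max_eq_left (le_trans hs ht.1.le), min_eq_left ht.2.le]
  rw [h1]

lemma one_le_tsum_pow_of_right (c : ℕ → ℝ) (hc : ∀ n, 0 ≤ c n) {zb s : ℝ}
    (hs : 0 ≤ s) (hlt : s < zb) (hsum : Summable fun n => c n * zb ^ n)
    (h : ∀ z : ℝ, s < z → z < zb → 1 ≤ ∑' n, c n * z ^ n) :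
    1 ≤ ∑' n, c n * s ^ n := by
  haveI : (nhdsWithin s (Set.Ioi s)).NeBot := nhdsGT_neBot s
  refine ge_of_tendsto (tendsto_tsum_pow_nhdsWithin_Ioi c hc hs hlt hsum) ?_
  filter_upwards [Ioo_mem_nhdsGT hlt] with t ht
  exact h t ht.1 ht.2

lemma exists_lt_one_right (c : ℕ → ℝ) (hc : ∀ n, 0 ≤ c n) {zb s : ℝ}
    (hs : 0 ≤ s) (hlt : s < zb) (hsum : Summable fun n => c n * zb ^ n)
    (h : ∑' n, c n * s ^ n < 1) :
    ∃ z : ℝ, s < z ∧ z < zb ∧ ∑' n, c n * z ^ n < 1 := by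
  haveI : (nhdsWithin s (Set.Ioi s)).NeBot := nhdsGT_neBot s
  have htend := tendsto_tsum_pow_nhdsWithin_Ioi c hc hs hlt hsum
  have hev : ∀ᶠ z in nhdsWithin s (Set.Ioi s), ∑' n, c n * z ^ n < 1 :=
    htend.eventually_lt_const h
  have hev2 : ∀ᶠ z in nhdsWithin s (Set.Ioi s), z ∈ Set.Ioo s zb :=
    Ioo_mem_nhdsGT hlt
  obtain ⟨z, hz1, hz2⟩ := (hev.and hev2).exists
  exact ⟨z, hz2.1, hz2.2, hz1⟩

end RCcont

section LCsection

variable {S : Type*}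

lemma pow_anti_of_le_one {a : ℝ≥0∞} (ha : a ≤ 1) {n N : ℕ} (h : n ≤ N) : a ^ N ≤ a ^ n := by
  have : a ^ N = a ^ n * a ^ (N - n) := by rw [← pow_add]; congr 1; omega
  rw [this]
  calc a ^ n * a ^ (N-n) ≤ a ^ n * 1 := mul_le_mul_right (pow_le_one' ha _) _
    _ = a ^ n := mul_one _

lemma exists_lt_of_one_lt_tsum_pow (c : ℕ → ℝ≥0∞) {z0 : ℝ} (hz0 : 0 < z0)
    (h : 1 < ∑' n, c n * (ENNReal.ofReal z0) ^ n) :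
    ∃ z : ℝ, 0 ≤ z ∧ z < z0 ∧ 1 < ∑' n, c n * (ENNReal.ofReal z) ^ n := by
  rw [ENNReal.tsum_eq_iSup_nat, lt_iSup_iff] at h
  obtain ⟨N, hN⟩ := h
  set SN := ∑ n ∈ Finset.range N, c n * (ENNReal.ofReal z0) ^ n with hSN
  set β := min SN 2 with hβ
  have hβ1 : 1 < β := lt_min hN one_lt_two
  have hβtop : β ≠ ∞ := ne_top_of_le_ne_top (by norm_num) (min_le_right _ _)
  have hβr : 1 < β.toReal := by
    have := (ENNReal.toReal_lt_toReal (by norm_num) hβtop).mpr hβ1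
    simpa using this
  have hrlt : β.toReal⁻¹ < 1 := by
    rw [inv_lt_one_iff₀]; right; exact hβr
  -- find θ ∈ (0,1) with θ^N > β.toReal⁻¹
  have hne : (nhdsWithin (1:ℝ) (Set.Ioo 0 1)).NeBot := by
    rw [nhdsWithin_Ioo_eq_nhdsLT one_pos]
    exact nhdsLT_neBot 1
  have htend : Filter.Tendsto (fun θ:ℝ => θ^N) (nhdsWithin 1 (Set.Ioo 0 1)) (nhds 1) := by
    have hcont := (continuous_pow N (M := ℝ)).tendsto 1
    rw [one_pow] at hcont
    exact hcont.mono_left nhdsWithin_le_nhds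
  have hev := htend.eventually_const_lt hrlt
  obtain ⟨θ, hθpow, hθmem⟩ := (hev.and eventually_mem_nhdsWithin).exists
  obtain ⟨hθ0, hθ1⟩ := hθmem
  refine ⟨θ * z0, le_of_lt (mul_pos hθ0 hz0), mul_lt_of_lt_one_left hz0 hθ1, ?_⟩
  have hofθ : ENNReal.ofReal θ ≤ 1 := by
    rw [ENNReal.ofReal_le_one]; exact hθ1.le
  have hkey : ENNReal.ofReal θ ^ N * SN ≤ ∑' n, c n * (ENNReal.ofReal (θ * z0)) ^ n := by
    calc ENNReal.ofReal θ ^ N * SN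
        = ∑ n ∈ Finset.range N, ENNReal.ofReal θ ^ N * (c n * (ENNReal.ofReal z0) ^ n) := by
          rw [hSN, Finset.mul_sum]
      _ ≤ ∑ n ∈ Finset.range N, c n * (ENNReal.ofReal (θ * z0)) ^ n := by
          refine Finset.sum_le_sum fun n hn => ?_
          rw [ENNReal.ofReal_mul hθ0.le, mul_pow]
          calc ENNReal.ofReal θ ^ N * (c n * ENNReal.ofReal z0 ^ n)
              = c n * (ENNReal.ofReal θ ^ N * ENNReal.ofReal z0 ^ n) := by ring
            _ ≤ c n * (ENNReal.ofReal θ ^ n * ENNReal.ofReal z0 ^ n) := by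
                refine mul_le_mul_right (mul_le_mul_left ?_ _) _
                exact pow_anti_of_le_one hofθ (Nat.lt_succ_iff.mp (by
                  exact Nat.lt_succ_of_lt (Finset.mem_range.mp hn)))
      _ ≤ ∑' n, c n * (ENNReal.ofReal (θ * z0)) ^ n := ENNReal.sum_le_tsum _
  refine lt_of_lt_of_le ?_ hkey
  have h2 : ENNReal.ofReal θ ^ N * β ≤ ENNReal.ofReal θ ^ N * SN :=
    mul_le_mul_right (min_le_left _ _) _
  refine lt_of_lt_of_le ?_ h2
  have h3 : ENNReal.ofReal θ ^ N * β = ENNReal.ofReal (θ ^ N * β.toReal) := by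
    rw [ENNReal.ofReal_mul (pow_nonneg hθ0.le N), ENNReal.ofReal_pow hθ0.le,
      ENNReal.ofReal_toReal hβtop]
  rw [h3, ENNReal.one_lt_ofReal]
  have h4 : β.toReal⁻¹ * β.toReal < θ ^ N * β.toReal :=
    mul_lt_mul_of_pos_right hθpow (by linarith)
  rwa [inv_mul_cancel₀ (by linarith : β.toReal ≠ 0)] at h4

lemma green_zero_self (W : S → S → ℝ) (x : S) : green W x x 0 = 1 := by
  rw [green, tsum_eq_single 0]
  · show ENNReal.ofReal (kpow W 0 x x * (0:ℝ) ^ 0) = 1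
    show ENNReal.ofReal ((if x = x then (1:ℝ) else 0) * (0:ℝ) ^ 0) = 1
    simp
  · intro n hn
    show ENNReal.ofReal (kpow W n x x * (0:ℝ) ^ n) = 0
    rw [zero_pow hn, mul_zero, ENNReal.ofReal_zero]

end LCsection

section MainHelpers

variable {S : Type*}

lemma UUE_scE_eq_tsum_pow (A : S → S → ℝ≥0∞) (z : ℝ≥0∞) (x : S) :
    UUE (scE A z) x x = ∑' n, urE A n x x * z ^ n :=
  tsum_congr fun n => urE_scE A z n x x

lemma convRadius_ge_real (a : ℕ → ℝ) {z : ℝ} (hz : 0 ≤ z)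
    (h : Summable fun n => a n * z ^ n) : ENNReal.ofReal z ≤ convRadius a := by
  have h2 : Summable fun n => a n * ((z.toNNReal : ℝ≥0) : ℝ) ^ n := by
    rw [Real.coe_toNNReal z hz]; exact h
  have h3 := convRadius_ge a z.toNNReal h2
  rwa [show ((z.toNNReal : ℝ≥0) : ℝ≥0∞) = ENNReal.ofReal z from rfl] at h3

lemma convRadius_le_real (a : ℕ → ℝ) (ha : ∀ n, 0 ≤ a n) {z : ℝ} (hz : 0 ≤ z)
    (h : ¬ Summable fun n => a n * z ^ n) : convRadius a ≤ ENNReal.ofReal z := by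
  have h2 : ¬ Summable fun n => a n * ((z.toNNReal : ℝ≥0) : ℝ) ^ n := by
    rw [Real.coe_toNNReal z hz]; exact h
  have h3 := convRadius_le a ha z.toNNReal h2
  rwa [show ((z.toNNReal : ℝ≥0) : ℝ≥0∞) = ENNReal.ofReal z from rfl] at h3

lemma sC_le_of_one_le_UUE {W : S → S → ℝ} (hW : IsTransProb W) (a : S) {z : ℝ} (hz : 0 ≤ z)
    (h : 1 ≤ UUE (scE (ofR W) (ENNReal.ofReal z)) a a) : sC W a ≤ ENNReal.ofReal z := by
  have hg : green W a a z = ∞ := by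
    rw [green_bridge hW a a hz]
    exact (GGE_eq_top_iff _ a).mpr h
  have hns : ¬ Summable fun n => kpow W n a a * z ^ n := fun hs =>
    ((green_ne_top_iff_summable hW a a hz).mpr hs) hg
  exact convRadius_le_real _ (fun n => kpow_nonneg_s8 hW n a a) hz hns

lemma one_le_UUE_of_not_summable {W : S → S → ℝ} (hW : IsTransProb W) (a : S) {z : ℝ}
    (hz : 0 ≤ z) (h : ¬ Summable fun n => kpow W n a a * z ^ n) :
    1 ≤ UUE (scE (ofR W) (ENNReal.ofReal z)) a a := by
  refine (GGE_eq_top_iff _ a).mp ?_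
  rw [← green_bridge hW a a hz]
  by_contra hne
  exact h ((green_ne_top_iff_summable hW a a hz).mp hne)

lemma summable_fret_of_UUE_ne_top {W : S → S → ℝ} (hW : IsTransProb W) (a : S) {z : ℝ}
    (hz : 0 ≤ z) (h : UUE (scE (ofR W) (ENNReal.ofReal z)) a a ≠ ∞) :
    Summable fun n => fret W n a a * z ^ n := by
  refine (Ufun_ne_top_iff_summable hW a a hz).mp ?_
  rw [Ufun_bridge hW a a hz]
  exact h

lemma UUE_eq_ofReal_tsum {W : S → S → ℝ} (hW : IsTransProb W) (a : S) {z : ℝ} (hz : 0 ≤ z)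
    (h : Summable fun n => fret W n a a * z ^ n) :
    UUE (scE (ofR W) (ENNReal.ofReal z)) a a = ENNReal.ofReal (∑' n, fret W n a a * z ^ n) := by
  rw [← Ufun_bridge hW a a hz, Ufun, ENNReal.ofReal_tsum_of_nonneg
    (fun n => mul_nonneg (fret_nonneg hW n a a) (pow_nonneg hz n)) h]

end MainHelpers

section SingleMain

variable {S : Type*}

lemma specRadius_pos_of_rec {P : S → S → ℝ} (hrec : RhoRecurrent P) (a : S) :
    0 < specRadius P := by
  rcases eq_or_lt_of_le (ENNReal.toReal_nonneg : 0 ≤ specRadius P) with heq | hlt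
  · exfalso
    have hg := hrec a
    have h0 : specRadius P = 0 := heq.symm
    rw [h0] at hg
    norm_num at hg
    rw [green_zero_self] at hg
    exact ENNReal.one_ne_top hg
  · exact hlt

lemma single_state_main (P : S → S → ℝ) (hP : IsTransProb P) (hirr : Irred P)
    (hρ : specRadius P < 1) (hrec : RhoRecurrent P) (a : S) {κ : ℝ}
    (hκ0 : 0 < κ) (hκ1 : κ < 1) :
    StrictlyRhoRecurrent (lazy P {a} κ) := by
  have hρ0 : 0 < specRadius P := specRadius_pos_of_rec hrec a
  set R := (specRadius P)⁻¹ with hRdef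
  have hR1 : 1 < R := one_lt_inv_iff₀.mpr ⟨hρ0, hρ⟩
  have hR0 : (0:ℝ) < R := lt_trans one_pos hR1
  -- the radius of the Green function of P is exactly ofReal R
  have hsCub : ∀ x, sC P x ≤ ENNReal.ofReal R := by
    intro x
    have hg := hrec x
    have hns : ¬ Summable fun n => kpow P n x x * R ^ n := fun hs =>
      ((green_ne_top_iff_summable hP x x hR0.le).mpr hs) hg
    exact convRadius_le_real _ (fun n => kpow_nonneg_s8 hP n x x) hR0.le hns
  have hsCP : ∀ x, sC P x = ENNReal.ofReal R := by
    intro x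
    have hfin : sC P x ≠ ∞ := ne_top_of_le_ne_top ENNReal.ofReal_ne_top (hsCub x)
    have hrT : specRadius P = (ENNReal.toReal (sC P x))⁻¹ := by
      rw [specRadius, specRadiusE_eq_inv_sC hP hirr x, ENNReal.toReal_inv]
    have hT : ENNReal.toReal (sC P x) = R := by
      rw [hRdef, hrT, inv_inv]
    rw [← hT, ENNReal.ofReal_toReal hfin]
  -- U_P(a,a|R) = 1
  set UPa := UUE (scE (ofR P) (ENNReal.ofReal R)) a a with hUPa
  have hUP_ge : 1 ≤ UPa := by
    refine (GGE_eq_top_iff _ a).mp ?_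
    rw [← green_bridge hP a a hR0.le]
    exact hrec a
  have hUP_le : UPa ≤ 1 := by
    by_contra hlt
    push_neg at hlt
    have h2 : 1 < ∑' n, urE (ofR P) n a a * (ENNReal.ofReal R) ^ n := by
      rw [← UUE_scE_eq_tsum_pow]; exact hlt
    obtain ⟨z, hz0, hzR, hz1⟩ := exists_lt_of_one_lt_tsum_pow _ hR0 h2
    have h3 : 1 ≤ UUE (scE (ofR P) (ENNReal.ofReal z)) a a := by
      rw [UUE_scE_eq_tsum_pow]; exact hz1.le
    have h4 := sC_le_of_one_le_UUE hP a hz0 h3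
    rw [hsCP a] at h4
    exact absurd h4 (not_le.mpr ((ENNReal.ofReal_lt_ofReal_iff hR0).mpr hzR))
  have hUPa1 : UPa = 1 := le_antisymm hUP_le hUP_ge
  -- lazy chain
  set Q := lazy P {a} κ with hQdef
  have hQtp : IsTransProb Q := lazy_isTransProb hP _ hκ0.le hκ1.le
  have hQirr : Irred Q := lazy_irred hP hirr _ hκ0.le hκ1
  have hΨ : UUE (scE (ofR Q) (ENNReal.ofReal R)) a a = ENNReal.ofReal (κ * R + (1 - κ)) := by
    rw [hQdef, UUE_lazy_single hP a hκ0.le hκ1.le, ← hUPa, hUPa1, mul_one,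
      ← ENNReal.ofReal_mul hκ0.le,
      ← ENNReal.ofReal_add (mul_nonneg hκ0.le hR0.le) (by linarith)]
  have hΨgt : 1 < UUE (scE (ofR Q) (ENNReal.ofReal R)) a a := by
    rw [hΨ, ENNReal.one_lt_ofReal]; nlinarith
  have hΨfin : UUE (scE (ofR Q) (ENNReal.ofReal R)) a a ≠ ∞ := by
    rw [hΨ]; exact ENNReal.ofReal_ne_top
  have hfret_sum_R : Summable fun n => fret Q n a a * R ^ n :=
    summable_fret_of_UUE_ne_top hQtp a hR0.le hΨfin
  have hrU : ENNReal.ofReal R ≤ rU Q a a := convRadius_ge_real _ hR0.le hfret_sum_R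
  -- divergence strictly below R
  have h2 : 1 < ∑' n, urE (ofR Q) n a a * (ENNReal.ofReal R) ^ n := by
    rw [← UUE_scE_eq_tsum_pow]; exact hΨgt
  obtain ⟨z1, hz10, hz1R, hz1gt⟩ := exists_lt_of_one_lt_tsum_pow _ hR0 h2
  have hsCQ_le : sC Q a ≤ ENNReal.ofReal z1 :=
    sC_le_of_one_le_UUE hQtp a hz10 (by rw [UUE_scE_eq_tsum_pow]; exact hz1gt.le)
  set s := sC Q a with hsdef
  have hs1 : 1 ≤ s := one_le_sC hQtp a
  have hsfin : s ≠ ∞ := ne_top_of_le_ne_top ENNReal.ofReal_ne_top hsCQ_le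
  have hrQ : (specRadius Q)⁻¹ = s.toReal := by
    rw [specRadius, specRadiusE_eq_inv_sC hQtp hQirr a, ENNReal.toReal_inv, inv_inv]
  set r' := s.toReal with hr'def
  have hofr' : ENNReal.ofReal r' = s := ENNReal.ofReal_toReal hsfin
  have hr'1 : 1 ≤ r' := by
    have h5 := (ENNReal.toReal_le_toReal (by norm_num) hsfin).mpr hs1
    simpa using h5
  have hr'0 : (0:ℝ) ≤ r' := le_trans zero_le_one hr'1
  have hr'z1 : r' ≤ z1 := by
    have h5 := (ENNReal.toReal_le_toReal hsfin ENNReal.ofReal_ne_top).mpr hsCQ_le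
    rwa [ENNReal.toReal_ofReal hz10] at h5
  have hr'R : r' < R := lt_of_le_of_lt hr'z1 hz1R
  -- rho-recurrence of the lazy chain
  have hgreen_a : green Q a a r' = ∞ := by
    have hfga : ∀ z : ℝ, r' < z → z < R → 1 ≤ ∑' n, fret Q n a a * z ^ n := by
      intro z hzl hzr
      have hz1' : (1:ℝ) < z := lt_of_le_of_lt hr'1 hzl
      have hzpos : (0:ℝ) < z := lt_trans one_pos hz1'
      have hnotsum : ¬ Summable fun n => kpow Q n a a * z ^ n := by
        intro hsum
        have h6 : ENNReal.ofReal z ≤ s :=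
          convRadius_ge_real (fun n => kpow Q n a a) hzpos.le hsum
        have hlt2 : s < ENNReal.ofReal z := by
          rw [← hofr']
          exact (ENNReal.ofReal_lt_ofReal_iff hzpos).mpr hzl
        exact absurd h6 (not_le.mpr hlt2)
      have h1le : 1 ≤ UUE (scE (ofR Q) (ENNReal.ofReal z)) a a :=
        one_le_UUE_of_not_summable hQtp a hzpos.le hnotsum
      have hsummz : Summable fun n => fret Q n a a * z ^ n :=
        summable_of_le_of_summable _ (fun n => fret_nonneg hQtp n a a) hzpos.le hzr.le
          hfret_sum_R
      rw [UUE_eq_ofReal_tsum hQtp a hzpos.le hsummz, ENNReal.one_le_ofReal] at h1le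
      exact h1le
    have hf1 : 1 ≤ ∑' n, fret Q n a a * r' ^ n :=
      one_le_tsum_pow_of_right _ (fun n => fret_nonneg hQtp n a a) hr'0 hr'R hfret_sum_R hfga
    have hsummr : Summable fun n => fret Q n a a * r' ^ n :=
      summable_of_le_of_summable _ (fun n => fret_nonneg hQtp n a a) hr'0 hr'R.le hfret_sum_R
    have hU : 1 ≤ UUE (scE (ofR Q) (ENNReal.ofReal r')) a a := by
      rw [UUE_eq_ofReal_tsum hQtp a hr'0 hsummr, ENNReal.one_le_ofReal]
      exact hf1
    rw [green_bridge hQtp a a hr'0]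
    exact (GGE_eq_top_iff _ a).mpr hU
  constructor
  · intro y
    rw [hrQ]
    exact green_top_solidarity hQtp hQirr a y (lt_of_lt_of_le one_pos hr'1) hgreen_a
  · refine ⟨a, ?_⟩
    rw [hrQ]
    show ENNReal.ofReal r' < rU Q a a
    rw [hofr']
    calc s ≤ ENNReal.ofReal z1 := hsCQ_le
      _ < ENNReal.ofReal R := (ENNReal.ofReal_lt_ofReal_iff hR0).mpr hz1R
      _ ≤ rU Q a a := hrU

end SingleMain

section UpperBound

variable {S : Type*}

lemma UUE_lazy_upper {P : S → S → ℝ} (hP : IsTransProb P) (L : Set S) (x : S) (hx : x ∈ L)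
    {κ z t : ℝ} (hκ0 : 0 < κ) (hκ1 : κ < 1) (hz1 : 1 ≤ z) (hκz : κ * z < 1)
    (ht : t = (1-κ)*z / (1-κ*z)) :
    UUE (scE (ofR (lazy P L κ)) (ENNReal.ofReal z)) x x
      ≤ ENNReal.ofReal κ * ENNReal.ofReal z
        + ENNReal.ofReal (1-κ*z) * UUE (scE (ofR P) (ENNReal.ofReal t)) x x := by
  have hz0 : (0:ℝ) ≤ z := le_trans zero_le_one hz1
  have h1κz : (0:ℝ) < 1 - κ*z := by linarith
  have h1κ : (0:ℝ) ≤ 1 - κ := by linarith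
  have htval : t * (1-κ*z) = (1-κ)*z := by
    rw [ht]; field_simp
  have ht0 : (0:ℝ) ≤ t := by
    rw [ht]; positivity
  have hzt : z ≤ t := by
    rw [ht, le_div_iff₀ h1κz]
    nlinarith [mul_le_mul_of_nonneg_left hz1 (mul_nonneg hκ0.le hz0)]
  have keyA : (1-κ)*z + κ*z*t = t := by nlinarith [htval]
  have keyB : (1-κ)*z = (1-κ*z)*t := by nlinarith [htval]
  set eκ := ENNReal.ofReal κ with heκ
  set e1κ := ENNReal.ofReal (1-κ) with he1κ
  set ezc := ENNReal.ofReal z with hezc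
  set et := ENNReal.ofReal t with het
  set A := scE (ofR (lazy P L κ)) ezc with hA
  set C := scE (ofR P) et with hC
  have key1 : e1κ * ezc + eκ * ezc * et ≤ et := by
    rw [heκ, he1κ, hezc, het, ← ENNReal.ofReal_mul h1κ, ← ENNReal.ofReal_mul hκ0.le,
      ← ENNReal.ofReal_mul (mul_nonneg hκ0.le hz0), ← ENNReal.ofReal_add
      (mul_nonneg h1κ hz0) (mul_nonneg (mul_nonneg hκ0.le hz0) ht0), keyA]
  have key2 : e1κ * ezc = ENNReal.ofReal (1-κ*z) * et := by
    rw [he1κ, hezc, het, ← ENNReal.ofReal_mul h1κ, ← ENNReal.ofReal_mul h1κz.le, keyB]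
  have hz_le_t : ezc ≤ et := by
    rw [hezc, het]; exact ENNReal.ofReal_le_ofReal hzt
  -- the fixed-point form of UUE C
  set Y : S → ℝ≥0∞ := fun w => ∑' v, if v = x then 0 else ofR P w v * UUE C v x with hY
  have hCval : ∀ w v, C w v = ofR P w v * et := fun w v => rfl
  have hXw : ∀ w, UUE C w x = et * (ofR P w x + Y w) := by
    intro w
    rw [UUE_fixed C w x, mul_add]
    congr 1
    · rw [hCval]; ring
    · rw [hY, ← ENNReal.tsum_mul_left]
      refine tsum_congr fun v => ?_
      by_cases hv : v = x
      · simp [hv]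
      · simp only [hv, if_false]
        rw [hCval]; ring
  -- decomposition of the rows of A
  have hA_decomp : ∀ w ∈ L, ∀ v,
      A w v = (if w = v then eκ * ezc else 0) + e1κ * ofR P w v * ezc := by
    intro w hwL v
    show ENNReal.ofReal (lazy P L κ w v) * ezc = _
    rw [lazy, if_pos hwL, ENNReal.ofReal_add (by split <;> [exact hκ0.le; exact le_refl 0])
      (mul_nonneg h1κ (hP.1 w v)), add_mul]
    congr 1
    · by_cases hwv : w = v
      · rw [if_pos hwv, if_pos hwv, heκ]
      · rw [if_neg hwv, if_neg hwv, ENNReal.ofReal_zero, zero_mul]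
    · rw [ENNReal.ofReal_mul h1κ, he1κ]
      rfl
  have hA_out : ∀ w, w ∉ L → ∀ v, A w v = ofR P w v * ezc := by
    intro w hwL v
    show ENNReal.ofReal (lazy P L κ w v) * ezc = _
    rw [lazy, if_neg hwL]
    rfl
  -- main comparison for excursions
  have claim : ∀ N, ∀ w, w ≠ x → SUE A x N w ≤ UUE C w x := by
    intro N
    induction N with
    | zero => intro w _; rw [SUE_zero]; exact zero_le
    | succ N ih =>
      cases N with
      | zero => intro w _; rw [SUE_one]; exact zero_le
      | succ M =>
        intro w hw
        rw [show M + 1 + 1 = M + 2 from rfl, SUE_succ_succ]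
        by_cases hwL : w ∈ L
        · -- lazy row
          have hsplit : (∑' v, if v = x then 0 else A w v * SUE A x (M+1) v)
              = (∑' v, if v = x then 0 else
                    (if w = v then eκ * ezc else 0) * SUE A x (M+1) v)
                + ∑' v, if v = x then 0 else (e1κ * ofR P w v * ezc) * SUE A x (M+1) v := by
            rw [← ENNReal.tsum_add]
            refine tsum_congr fun v => ?_
            by_cases hv : v = x
            · simp [hv]
            · simp only [hv, if_false]
              rw [hA_decomp w hwL v, add_mul]
          have hT1 : (∑' v, if v = x then 0 else
              (if w = v then eκ * ezc else 0) * SUE A x (M+1) v)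
                = eκ * ezc * SUE A x (M+1) w := by
            rw [tsum_eq_single w]
            · rw [if_neg hw, if_pos rfl]
            · intro v hv
              by_cases hvx : v = x
              · rw [if_pos hvx]
              · rw [if_neg hvx, if_neg (fun h => hv h.symm), zero_mul]
          have hT2 : (∑' v, if v = x then 0 else (e1κ * ofR P w v * ezc) * SUE A x (M+1) v)
              ≤ e1κ * ezc * Y w := by
            calc (∑' v, if v = x then 0 else (e1κ * ofR P w v * ezc) * SUE A x (M+1) v)
                ≤ ∑' v, (if v = x then 0 else e1κ * ezc * (ofR P w v * UUE C v x)) := by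
                  refine ENNReal.tsum_le_tsum fun v => ?_
                  by_cases hv : v = x
                  · simp [hv]
                  · simp only [hv, if_false]
                    calc (e1κ * ofR P w v * ezc) * SUE A x (M+1) v
                        ≤ (e1κ * ofR P w v * ezc) * UUE C v x :=
                          mul_le_mul_right (ih v hv) _
                      _ = e1κ * ezc * (ofR P w v * UUE C v x) := by ring
              _ = e1κ * ezc * Y w := by
                  rw [hY, ← ENNReal.tsum_mul_left]
                  refine tsum_congr fun v => ?_
                  by_cases hv : v = x <;> simp [hv]
          have hAwx : A w x = e1κ * ofR P w x * ezc := by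
            rw [hA_decomp w hwL x, if_neg hw, zero_add]
          calc A w x + ∑' v, (if v = x then 0 else A w v * SUE A x (M+1) v)
              ≤ e1κ * ofR P w x * ezc + (eκ * ezc * UUE C w x + e1κ * ezc * Y w) := by
                rw [hAwx, hsplit, hT1]
                exact add_le_add_right (add_le_add (mul_le_mul_right (ih w hw) _) hT2) _
            _ = (e1κ * ezc + eκ * ezc * et) * (ofR P w x + Y w) := by
                rw [hXw w]; ring
            _ ≤ et * (ofR P w x + Y w) := mul_le_mul_left key1 _
            _ = UUE C w x := (hXw w).symm
        · -- plain row
          have hle : (∑' v, if v = x then 0 else A w v * SUE A x (M+1) v)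
              ≤ ezc * Y w := by
            calc (∑' v, if v = x then 0 else A w v * SUE A x (M+1) v)
                ≤ ∑' v, (if v = x then 0 else ezc * (ofR P w v * UUE C v x)) := by
                  refine ENNReal.tsum_le_tsum fun v => ?_
                  by_cases hv : v = x
                  · simp [hv]
                  · simp only [hv, if_false]
                    rw [hA_out w hwL v]
                    calc (ofR P w v * ezc) * SUE A x (M+1) v
                        ≤ (ofR P w v * ezc) * UUE C v x := mul_le_mul_right (ih v hv) _
                      _ = ezc * (ofR P w v * UUE C v x) := by ring
              _ = ezc * Y w := by
                  rw [hY, ← ENNReal.tsum_mul_left]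
                  refine tsum_congr fun v => ?_
                  by_cases hv : v = x <;> simp [hv]
          calc A w x + ∑' v, (if v = x then 0 else A w v * SUE A x (M+1) v)
              ≤ ofR P w x * ezc + ezc * Y w := by
                rw [hA_out w hwL x]
                exact add_le_add_right hle _
            _ = ezc * (ofR P w x + Y w) := by ring
            _ ≤ et * (ofR P w x + Y w) := mul_le_mul_left hz_le_t _
            _ = UUE C w x := (hXw w).symm
  -- the x-row
  have hfinal : ∀ N, SUE A x N x ≤ eκ * ezc + ENNReal.ofReal (1-κ*z) * UUE C x x := by
    intro N
    cases N with
    | zero => rw [SUE_zero]; exact zero_le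
    | succ N =>
      cases N with
      | zero => rw [SUE_one]; exact zero_le
      | succ M =>
        rw [show M + 1 + 1 = M + 2 from rfl, SUE_succ_succ]
        have hT2 : (∑' v, if v = x then 0 else A x v * SUE A x (M+1) v)
            ≤ e1κ * ezc * Y x := by
          calc (∑' v, if v = x then 0 else A x v * SUE A x (M+1) v)
              ≤ ∑' v, (if v = x then 0 else e1κ * ezc * (ofR P x v * UUE C v x)) := by
                refine ENNReal.tsum_le_tsum fun v => ?_
                by_cases hv : v = x
                · simp [hv]
                · simp only [hv, if_false]
                  rw [hA_decomp x hx v, if_neg (fun h => hv h.symm), zero_add]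
                  calc (e1κ * ofR P x v * ezc) * SUE A x (M+1) v
                      ≤ (e1κ * ofR P x v * ezc) * UUE C v x :=
                        mul_le_mul_right (claim (M+1) v hv) _
                    _ = e1κ * ezc * (ofR P x v * UUE C v x) := by ring
            _ = e1κ * ezc * Y x := by
                rw [hY, ← ENNReal.tsum_mul_left]
                refine tsum_congr fun v => ?_
                by_cases hv : v = x <;> simp [hv]
        have hAxx : A x x = eκ * ezc + e1κ * ofR P x x * ezc := by
          rw [hA_decomp x hx x, if_pos rfl]
        calc A x x + ∑' v, (if v = x then 0 else A x v * SUE A x (M+1) v)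
            ≤ (eκ * ezc + e1κ * ofR P x x * ezc) + e1κ * ezc * Y x := by
              rw [hAxx]
              exact add_le_add_right hT2 _
          _ = eκ * ezc + (e1κ * ezc) * (ofR P x x + Y x) := by ring
          _ = eκ * ezc + ENNReal.ofReal (1-κ*z) * (et * (ofR P x x + Y x)) := by
              rw [key2]; ring
          _ = eκ * ezc + ENNReal.ofReal (1-κ*z) * UUE C x x := by rw [hXw x]
  rw [UUE_eq_iSup_SUE]
  exact iSup_le hfinal

end UpperBound

section RhoLazy

variable {S : Type*}

lemma fret_le_kpow {W : S → S → ℝ} (hW : IsTransProb W) (n : ℕ) (x y : S) :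
    fret W n x y ≤ kpow W n x y := by
  have h := urE_le_pwE (ofR W) n x y
  rw [← (fret_bridge hW n x y).2, ← kpow_eq hW n x y] at h
  exact (ENNReal.ofReal_le_ofReal_iff (kpow_nonneg_s8 hW n x y)).mp h

lemma summable_kpow_of_lt_sC {W : S → S → ℝ} (hW : IsTransProb W) (x : S) {z : ℝ}
    (hz : 0 ≤ z) (h : ENNReal.ofReal z < sC W x) :
    Summable fun n => kpow W n x x * z ^ n := by
  obtain ⟨z', hz', hlt⟩ := exists_summable_of_lt _ h
  have hle : z ≤ (z' : ℝ) := by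
    have h2 := le_of_lt hlt
    rw [show ENNReal.ofReal z = ((z.toNNReal : ℝ≥0) : ℝ≥0∞) from rfl, ENNReal.coe_le_coe] at h2
    calc z = (z.toNNReal : ℝ) := (Real.coe_toNNReal z hz).symm
      _ ≤ (z' : ℝ) := by exact_mod_cast h2
  exact summable_of_le_of_summable _ (fun n => kpow_nonneg_s8 hW n x x) hz hle hz'

lemma rho_lazy_lt_one {P : S → S → ℝ} (hP : IsTransProb P) (hirr : Irred P)
    (hρ : specRadius P < 1) (hrec : RhoRecurrent P) (L : Set S) (x : S) (hx : x ∈ L)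
    {κ : ℝ} (hκ0 : 0 < κ) (hκ1 : κ < 1) : specRadius (lazy P L κ) < 1 := by
  have hρ0 : 0 < specRadius P := specRadius_pos_of_rec hrec x
  set R := (specRadius P)⁻¹ with hRdef
  have hR1 : 1 < R := one_lt_inv_iff₀.mpr ⟨hρ0, hρ⟩
  have hR0 : (0:ℝ) < R := lt_trans one_pos hR1
  have hsCub : sC P x ≤ ENNReal.ofReal R := by
    have hg := hrec x
    have hns : ¬ Summable fun n => kpow P n x x * R ^ n := fun hs =>
      ((green_ne_top_iff_summable hP x x hR0.le).mpr hs) hg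
    exact convRadius_le_real _ (fun n => kpow_nonneg_s8 hP n x x) hR0.le hns
  have hsCP : sC P x = ENNReal.ofReal R := by
    have hfin : sC P x ≠ ∞ := ne_top_of_le_ne_top ENNReal.ofReal_ne_top hsCub
    have hrT : specRadius P = (ENNReal.toReal (sC P x))⁻¹ := by
      rw [specRadius, specRadiusE_eq_inv_sC hP hirr x, ENNReal.toReal_inv]
    have hT : ENNReal.toReal (sC P x) = R := by rw [hRdef, hrT, inv_inv]
    rw [← hT, ENNReal.ofReal_toReal hfin]
  set Q := lazy P L κ with hQdef
  have hQtp : IsTransProb Q := lazy_isTransProb hP _ hκ0.le hκ1.le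
  have hQirr : Irred Q := lazy_irred hP hirr _ hκ0.le hκ1
  -- choice of the point z̄ > 1
  set d : ℝ := 1 - κ + κ * R with hd
  have hd0 : (0:ℝ) < d := by nlinarith
  set zmax : ℝ := R / d with hzmax
  have hzmax1 : 1 < zmax := by
    rw [hzmax, lt_div_iff₀ hd0]; nlinarith
  set zb : ℝ := (1 + zmax)/2 with hzb
  have hzb1 : 1 < zb := by rw [hzb]; linarith
  have hzb0 : (0:ℝ) ≤ zb := by linarith
  have hzbmax : zb < zmax := by rw [hzb]; linarith
  have hzmaxd : zmax * d = R := by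
    rw [hzmax]; field_simp
  have hκzmax : κ * zmax < 1 := by
    have h5 : κ * zmax * d = κ * R := by rw [mul_assoc, hzmaxd]
    nlinarith
  have hκzb : κ * zb < 1 :=
    lt_of_le_of_lt (mul_le_mul_of_nonneg_left hzbmax.le hκ0.le) hκzmax
  set tb : ℝ := (1-κ)*zb/(1-κ*zb) with htb
  have h1κzb : (0:ℝ) < 1 - κ*zb := by linarith
  have htb0 : (0:ℝ) ≤ tb := by
    rw [htb]
    exact div_nonneg (mul_nonneg (by linarith) hzb0) h1κzb.le
  have htbR : tb < R := by
    rw [htb, div_lt_iff₀ h1κzb]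
    have h6 : zb * d < R := by
      calc zb * d < zmax * d := by
            exact mul_lt_mul_of_pos_right hzbmax hd0
        _ = R := hzmaxd
    nlinarith
  -- U_P is finite at tb
  have hsumk_tb : Summable fun n => kpow P n x x * tb ^ n := by
    refine summable_kpow_of_lt_sC hP x htb0 ?_
    rw [hsCP]
    exact (ENNReal.ofReal_lt_ofReal_iff hR0).mpr htbR
  have hsumf_tb : Summable fun n => fret P n x x * tb ^ n :=
    Summable.of_nonneg_of_le
      (fun n => mul_nonneg (fret_nonneg hP n x x) (pow_nonneg htb0 n))
      (fun n => mul_le_mul_of_nonneg_right (fret_le_kpow hP n x x) (pow_nonneg htb0 n))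
      hsumk_tb
  have hUPfin : UUE (scE (ofR P) (ENNReal.ofReal tb)) x x ≠ ∞ := by
    rw [← Ufun_bridge hP x x htb0]
    exact (Ufun_ne_top_iff_summable hP x x htb0).mpr hsumf_tb
  -- hence U_Q is finite at zb
  have hUBzb := UUE_lazy_upper hP L x hx hκ0 hκ1 hzb1.le hκzb htb
  have hQfin : UUE (scE (ofR Q) (ENNReal.ofReal zb)) x x ≠ ∞ := by
    refine ne_top_of_le_ne_top ?_ hUBzb
    exact ENNReal.add_ne_top.mpr ⟨ENNReal.mul_ne_top ENNReal.ofReal_ne_top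
      ENNReal.ofReal_ne_top, ENNReal.mul_ne_top ENNReal.ofReal_ne_top hUPfin⟩
  have hsumfQ_zb : Summable fun n => fret Q n x x * zb ^ n :=
    summable_fret_of_UUE_ne_top hQtp x hzb0 hQfin
  -- U_P(1) < 1
  have hsumk_1 : Summable fun n => kpow P n x x * (1:ℝ) ^ n := by
    refine summable_kpow_of_lt_sC hP x zero_le_one ?_
    rw [hsCP, ENNReal.ofReal_one]
    exact ENNReal.one_lt_ofReal.mpr hR1
  have hUP1 : UUE (scE (ofR P) (ENNReal.ofReal 1)) x x < 1 := by
    refine (GGE_ne_top_iff _ x).mp ?_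
    rw [← green_bridge hP x x zero_le_one]
    exact (green_ne_top_iff_summable hP x x zero_le_one).mpr hsumk_1
  -- U_Q(1) < 1
  have ht1 : (1:ℝ) = (1-κ)*1/(1-κ*1) := by
    rw [mul_one, mul_one, div_self (by linarith : (1:ℝ)-κ ≠ 0)]
  have hUB1 := UUE_lazy_upper hP L x hx hκ0 hκ1 (le_refl 1) (by linarith) ht1
  have hU1lt : UUE (scE (ofR Q) (ENNReal.ofReal 1)) x x < 1 := by
    refine lt_of_le_of_lt hUB1 ?_
    have hstrict : ENNReal.ofReal (1-κ*1) * UUE (scE (ofR P) (ENNReal.ofReal 1)) x x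
        < ENNReal.ofReal (1-κ*1) * 1 := by
      refine ENNReal.mul_lt_mul_right ?_ ENNReal.ofReal_ne_top hUP1
      exact ofReal_ne_zero_of_pos (by linarith)
    calc ENNReal.ofReal κ * ENNReal.ofReal 1
          + ENNReal.ofReal (1-κ*1) * UUE (scE (ofR P) (ENNReal.ofReal 1)) x x
        < ENNReal.ofReal κ * ENNReal.ofReal 1 + ENNReal.ofReal (1-κ*1) * 1 :=
          ENNReal.add_lt_add_left (ENNReal.mul_ne_top ENNReal.ofReal_ne_top
            ENNReal.ofReal_ne_top) hstrict
      _ = 1 := by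
          rw [mul_one, ENNReal.ofReal_one, mul_one,
            ← ENNReal.ofReal_add hκ0.le (by linarith), show κ + (1-κ*1) = 1 by ring,
            ENNReal.ofReal_one]
  -- convert to a real statement and move strictly beyond 1
  have hsumfQ_1 : Summable fun n => fret Q n x x * (1:ℝ) ^ n :=
    summable_of_le_of_summable _ (fun n => fret_nonneg hQtp n x x) zero_le_one hzb1.le
      hsumfQ_zb
  have hf1lt : (∑' n, fret Q n x x * (1:ℝ) ^ n) < 1 := by
    have := hU1lt
    rw [UUE_eq_ofReal_tsum hQtp x zero_le_one hsumfQ_1, ENNReal.ofReal_lt_one] at this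
    exact this
  obtain ⟨z₂, hz₂1, hz₂zb, hz₂lt⟩ := exists_lt_one_right (fun n => fret Q n x x)
    (fun n => fret_nonneg hQtp n x x) zero_le_one hzb1 hsumfQ_zb hf1lt
  have hz₂0 : (0:ℝ) ≤ z₂ := by linarith
  have hsumfQ_z₂ : Summable fun n => fret Q n x x * z₂ ^ n :=
    summable_of_le_of_summable _ (fun n => fret_nonneg hQtp n x x) hz₂0 hz₂zb.le hsumfQ_zb
  have hUz₂ : UUE (scE (ofR Q) (ENNReal.ofReal z₂)) x x < 1 := by
    rw [UUE_eq_ofReal_tsum hQtp x hz₂0 hsumfQ_z₂, ENNReal.ofReal_lt_one]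
    exact hz₂lt
  have hgreenz₂ : green Q x x z₂ ≠ ∞ := by
    rw [green_bridge hQtp x x hz₂0]
    exact (GGE_ne_top_iff _ x).mpr hUz₂
  have hsumkQ_z₂ : Summable fun n => kpow Q n x x * z₂ ^ n :=
    (green_ne_top_iff_summable hQtp x x hz₂0).mp hgreenz₂
  have hsCQ_ge : ENNReal.ofReal z₂ ≤ sC Q x := convRadius_ge_real _ hz₂0 hsumkQ_z₂
  have hspecQ : specRadius Q = (ENNReal.toReal (sC Q x))⁻¹ := by
    rw [specRadius, specRadiusE_eq_inv_sC hQtp hQirr x, ENNReal.toReal_inv]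
  by_cases hfin : sC Q x = ∞
  · rw [hspecQ, hfin]
    norm_num
  · have h1 : z₂ ≤ ENNReal.toReal (sC Q x) := by
      have h7 := (ENNReal.toReal_le_toReal ENNReal.ofReal_ne_top hfin).mpr hsCQ_ge
      rwa [ENNReal.toReal_ofReal hz₂0] at h7
    rw [hspecQ, inv_lt_one_iff₀]
    right
    linarith

end RhoLazy

end LazyAux

theorem lazy_strictlyRhoRecurrent_of_rhoRecurrent {S : Type*} [Countable S] [Infinite S] (P : S → S → ℝ)
    (hP : IsTransProb P) (hirr : Irred P)
    (L : Set S) (hρ : specRadius P < 1) (hLne : L.Nonempty) (hLfin : L.Finite)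
    (hrec : RhoRecurrent P) :
    ∀ κ ∈ Set.Ioo (0 : ℝ) 1, StrictlyRhoRecurrent (lazy P L κ) := by
  intro κ hκ
  obtain ⟨hκ0, hκ1⟩ := hκ
  have main : L.Nonempty → StrictlyRhoRecurrent (lazy P L κ) := by
    refine Set.Finite.induction_on L hLfin ?_ ?_
    · intro h
      exact absurd h (by simp)
    · intro a Lp ha hfinp IH _
      by_cases hLpne : Lp.Nonempty
      · have IHp := IH hLpne
        have hP''tp : IsTransProb (lazy P Lp κ) :=
          LazyAux.lazy_isTransProb hP _ hκ0.le hκ1.le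
        have hP''irr : Irred (lazy P Lp κ) := LazyAux.lazy_irred hP hirr _ hκ0.le hκ1
        have hP''rec : RhoRecurrent (lazy P Lp κ) := IHp.1
        obtain ⟨x', hx'⟩ := hLpne
        have hP''ρ : specRadius (lazy P Lp κ) < 1 :=
          LazyAux.rho_lazy_lt_one hP hirr hρ hrec Lp x' hx' hκ0 hκ1
        have hmain := LazyAux.single_state_main (lazy P Lp κ) hP''tp hP''irr hP''ρ hP''rec a
          hκ0 hκ1
        rw [LazyAux.lazy_insert P Lp a ha κ]
        exact hmain
      · have hLp : Lp = ∅ := Set.not_nonempty_iff_eq_empty.mp hLpne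
        subst hLp
        rw [LazyAux.lazy_insert P ∅ a (by simp) κ, LazyAux.lazy_empty]
        exact LazyAux.single_state_main P hP hirr hρ hrec a hκ0 hκ1
  exact main hLne
end
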